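/- arXiv:1309.0158 — 5 statements merged into one kernel-verified Lean document; each statement's English description precedes it below -/
import Mathlib

section
/- Let P and P̃ be stochastic matrices on a finite set 𝒱. Suppose P is irreducible with invariant probability vector π and finite mixing time t_mix, and let π̃ be an invariant probability vector of P̃. Then for every subset W ⊆ 𝒱 containing supp(P̃ − P), one has ‖π̃ − π‖ ≤ Ψ(t_mix · π̃(W)), where π̃(W) := Σ_{w∈W} π̃_w. -/
open scoped Classical BigOperators
open Finset

variable {V : Type*}

/-- A (row-)stochastic matrix: nonnegative entries, rows summing to one. -/
def IsStochastic [Fintype V] (P : Matrix V V ℝ) : Prop :=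
  (∀ u v, 0 ≤ P u v) ∧ ∀ u, ∑ v, P u v = 1

/-- Irreducibility: the digraph with an edge `(u,v)` whenever `P u v > 0`
is strongly connected. -/
def IrreducibleMatrix [Fintype V] (P : Matrix V V ℝ) : Prop :=
  ∀ u v : V, Relation.ReflTransGen (fun a b => 0 < P a b) u v

/-- `p` is an invariant probability (row) vector of `P`. -/
def InvariantProb [Fintype V] (P : Matrix V V ℝ) (p : V → ℝ) : Prop :=
  (∀ v, 0 ≤ p v) ∧ (∑ v, p v = 1) ∧ ∀ v, ∑ u, p u * P u v = p v

/-- Total variation distance. -/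
noncomputable def tvDist [Fintype V] (mu p : V → ℝ) : ℝ :=
  (1 / 2) * ∑ v, |mu v - p v|

/-- The smallest positive solution of `x * log (e^2 / x) = 1`. -/
noncomputable def xstar : ℝ :=
  sInf {x : ℝ | 0 < x ∧ x * Real.log (Real.exp 2 / x) = 1}

/-- The function `Ψ`: `Ψ(x) = x log(e²/x)` for `x ≤ x*`, and `1` for `x > x*`
(note `Ψ(0) = 0` since `Real.log (e²/0) = Real.log 0 = 0`). -/
noncomputable def Psi (x : ℝ) : ℝ :=
  if x ≤ xstar then x * Real.log (Real.exp 2 / x) else 1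

open Fin.NatCast in
/-- `phi P W w k` is the probability that a chain with transition matrix `P`
started at `w` exits `W` exactly at time `k`: the sum over `(k+1)`-tuples
`ξ` with `ξ 0 = w`, `ξ l ∈ W` for `0 < l < k`, `ξ k ∉ W`, of `∏ P (ξ (l-1)) (ξ l)`. -/
noncomputable def phi [Fintype V] (P : Matrix V V ℝ) (W : Finset V) (w : V) (k : ℕ) : ℝ :=
  ∑ ξ ∈ Finset.univ.filter (fun ξ : Fin (k + 1) → V =>
      ξ 0 = w ∧ (∀ l : ℕ, 0 < l → l < k → ξ l ∈ W) ∧ ξ k ∉ W),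
    ∏ l ∈ Finset.range k, P (ξ l) (ξ (l + 1))

/-- `(1/t) * min_{w ∈ W, p w > 0} ∑_{k=1}^t phi w k` (the minimum over an empty
index set is taken to be `1`). -/
noncomputable def exitProbAux [Fintype V] (P : Matrix V V ℝ) (p : V → ℝ) (W : Finset V)
    (t : ℕ) : ℝ :=
  if h : (W.filter fun w => 0 < p w).Nonempty then
    (W.filter fun w => 0 < p w).inf' h
      (fun w => (1 / (t : ℝ)) * ∑ k ∈ Finset.Icc 1 t, phi P W w k)
  else 1

/-- The exit probability from `W`:
`sup_{t ≥ 1} min_{w ∈ W, p w > 0} (1/t) ∑_{k=1}^t phi w k`. -/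
noncomputable def exitProb [Fintype V] (P : Matrix V V ℝ) (p : V → ℝ) (W : Finset V) : ℝ :=
  sSup {x : ℝ | ∃ t : ℕ, 1 ≤ t ∧ x = exitProbAux P p W t}

/-- The entrance time `τ*_W := min_{u ∉ W} τ^u`. -/
noncomputable def entranceTime (tau : V → ℝ) (W : Finset V) : ℝ :=
  sInf {x : ℝ | ∃ u, u ∉ W ∧ x = tau u}

noncomputable def Nn [Fintype V] (z : V → ℝ) : ℝ := (1/2) * ∑ v, |z v|

lemma Nn_nonneg [Fintype V] (z : V → ℝ) : 0 ≤ Nn z := by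
  have : 0 ≤ ∑ v, |z v| := Finset.sum_nonneg fun v _ => abs_nonneg _
  unfold Nn; linarith

lemma Nn_add_le [Fintype V] (f g : V → ℝ) : Nn (fun v => f v + g v) ≤ Nn f + Nn g := by
  unfold Nn
  have : ∑ v, |f v + g v| ≤ ∑ v, (|f v| + |g v|) :=
    Finset.sum_le_sum fun v _ => abs_add_le _ _
  rw [Finset.sum_add_distrib] at this
  linarith

lemma Nn_sum_le [Fintype V] {ι : Type*} (s : Finset ι) (g : ι → V → ℝ) :
    Nn (fun v => ∑ i ∈ s, g i v) ≤ ∑ i ∈ s, Nn (g i) := by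
  classical
  induction s using Finset.induction with
  | empty => simp [Nn]
  | insert a s hx ih =>
    simp only [Finset.sum_insert hx]
    exact le_trans (Nn_add_le _ _) (by linarith [ih])

lemma Nn_smul [Fintype V] (a : ℝ) (ha : 0 ≤ a) (f : V → ℝ) :
    Nn (fun v => a * f v) = a * Nn f := by
  unfold Nn
  have : ∀ v, |a * f v| = a * |f v| := fun v => by rw [abs_mul, abs_of_nonneg ha]
  simp only [this]
  rw [← Finset.mul_sum]; ring

lemma Nn_rowdiff_le_one [Fintype V] {Q : Matrix V V ℝ} (hQ : IsStochastic Q) (u w : V) :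
    Nn (fun v => Q u v - Q w v) ≤ 1 := by
  unfold Nn
  have h1 : ∑ v, |Q u v - Q w v| ≤ ∑ v, (Q u v + Q w v) :=
    Finset.sum_le_sum fun v _ => (abs_sub _ _).trans (by
      rw [abs_of_nonneg (hQ.1 u v), abs_of_nonneg (hQ.1 w v)])
  rw [Finset.sum_add_distrib, hQ.2 u, hQ.2 w] at h1
  linarith

lemma Nn_eq_pos_part [Fintype V] (z : V → ℝ) (hz : ∑ v, z v = 0) :
    Nn z = ∑ v, max (z v) 0 := by
  unfold Nn
  have : ∀ v, |z v| = max (z v) 0 + max (-z v) 0 := fun v => by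
    rcases le_total (z v) 0 with h | h
    · rw [abs_of_nonpos h, max_eq_right h, max_eq_left (by linarith)]; ring
    · rw [abs_of_nonneg h, max_eq_left h, max_eq_right (by linarith)]; ring
  simp_rw [this]
  rw [Finset.sum_add_distrib]
  have h2 : ∑ v, max (-z v) 0 = ∑ v, (max (z v) 0 - z v) := by
    apply Finset.sum_congr rfl; intro v _
    rcases le_total (z v) 0 with h | h
    · rw [max_eq_left (by linarith), max_eq_right h]; ring
    · rw [max_eq_right (by linarith), max_eq_left h]; ring
  rw [h2, Finset.sum_sub_distrib, hz]
  ring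

/-- Key contraction lemma. -/
lemma keyA [Fintype V] {Q : Matrix V V ℝ} (hQ : IsStochastic Q) (z : V → ℝ)
    (hz : ∑ v, z v = 0) {c : ℝ} (hc : ∀ u w, Nn (fun v => Q u v - Q w v) ≤ c) :
    Nn (fun v => ∑ u, z u * Q u v) ≤ Nn z * c := by
  classical
  set p : V → ℝ := fun u => max (z u) 0 with hp
  set n : V → ℝ := fun u => max (-z u) 0 with hn
  have hpn : ∀ u, z u = p u - n u := by
    intro u; rcases le_total (z u) 0 with h | h
    · simp [hp, hn, max_eq_right h, max_eq_left (by linarith : (0:ℝ) ≤ -z u)]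
    · simp [hp, hn, max_eq_left h, max_eq_right (by linarith : -z u ≤ (0:ℝ))]
  have hp0 : ∀ u, 0 ≤ p u := fun u => le_max_right _ _
  have hn0 : ∀ u, 0 ≤ n u := fun u => le_max_right _ _
  set m : ℝ := ∑ u, p u with hm
  have hNz : Nn z = m := Nn_eq_pos_part z hz
  have hsn : ∑ u, n u = m := by
    have : ∑ u, n u = ∑ u, (p u - z u) := by
      apply Finset.sum_congr rfl; intro u _; rw [hpn u]; ring
    rw [this, Finset.sum_sub_distrib, hz, hm]; ring
  have hm0 : 0 ≤ m := Finset.sum_nonneg fun u _ => hp0 u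
  rcases eq_or_lt_of_le hm0 with hm0' | hmpos
  · -- m = 0 : z = 0
    have hz0 : ∀ u, z u = 0 := by
      intro u
      have h1 : p u = 0 := by
        have := (Finset.sum_eq_zero_iff_of_nonneg (fun u _ => hp0 u)).mp hm0'.symm u (mem_univ u)
        exact this
      have h2 : n u = 0 := by
        have := (Finset.sum_eq_zero_iff_of_nonneg (fun u _ => hn0 u)).mp
          (by rw [hsn]; exact hm0'.symm) u (mem_univ u)
        exact this
      rw [hpn u, h1, h2]; ring
    have : Nn (fun v => ∑ u, z u * Q u v) = 0 := by
      have : (fun v => ∑ u, z u * Q u v) = fun _ => (0:ℝ) := by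
        funext v; apply Finset.sum_eq_zero; intro u _; rw [hz0 u]; ring
      rw [this]; simp [Nn]
    rw [this, hNz, ← hm0']; ring_nf; simp
  · -- m > 0
    have hkey : ∀ v, m * (∑ u, z u * Q u v) = ∑ u, ∑ w, p u * n w * (Q u v - Q w v) := by
      intro v
      have : ∀ u, ∑ w, p u * n w * (Q u v - Q w v)
          = m * (p u * Q u v) - p u * ∑ w, n w * Q w v := by
        intro u
        rw [← hsn, Finset.sum_mul, Finset.mul_sum, ← Finset.sum_sub_distrib]
        apply Finset.sum_congr rfl; intro w _; ring
      simp_rw [this]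
      rw [Finset.sum_sub_distrib, ← Finset.mul_sum, ← Finset.sum_mul, ← hm]
      have hexp : ∑ u, z u * Q u v = ∑ u, (p u * Q u v - n u * Q u v) := by
        apply Finset.sum_congr rfl; intro u _; rw [hpn u]; ring
      rw [hexp, Finset.sum_sub_distrib]
      ring
  -- bound
    have hb : Nn (fun v => ∑ u, ∑ w, p u * n w * (Q u v - Q w v)) ≤ m * m * c := by
      calc Nn (fun v => ∑ u, ∑ w, p u * n w * (Q u v - Q w v))
          ≤ ∑ u, Nn (fun v => ∑ w, p u * n w * (Q u v - Q w v)) := Nn_sum_le _ _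
        _ ≤ ∑ u, ∑ w, Nn (fun v => p u * n w * (Q u v - Q w v)) :=
            Finset.sum_le_sum fun u _ => Nn_sum_le _ _
        _ = ∑ u, ∑ w, p u * n w * Nn (fun v => Q u v - Q w v) := by
            apply Finset.sum_congr rfl; intro u _
            apply Finset.sum_congr rfl; intro w _
            exact Nn_smul _ (mul_nonneg (hp0 u) (hn0 w)) _
        _ ≤ ∑ u, ∑ w, p u * n w * c :=
            Finset.sum_le_sum fun u _ => Finset.sum_le_sum fun w _ =>
              mul_le_mul_of_nonneg_left (hc u w) (mul_nonneg (hp0 u) (hn0 w))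
        _ = m * m * c := by
            simp_rw [mul_assoc, ← Finset.mul_sum, ← Finset.sum_mul]
            rw [← hm, hsn]
    have hleft : Nn (fun v => m * ∑ u, z u * Q u v) = m * Nn (fun v => ∑ u, z u * Q u v) :=
      Nn_smul m hm0 _
    have : m * Nn (fun v => ∑ u, z u * Q u v) ≤ m * (m * c) := by
      rw [← hleft]
      have : (fun v => m * ∑ u, z u * Q u v)
          = fun v => ∑ u, ∑ w, p u * n w * (Q u v - Q w v) := funext hkey
      rw [this]; linarith [hb]
    have := le_of_mul_le_mul_left (by linarith : m * Nn (fun v => ∑ u, z u * Q u v) ≤ m * (m*c)) hmpos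
    rw [hNz]; linarith

lemma stoch_one [Fintype V] [DecidableEq V] : IsStochastic (1 : Matrix V V ℝ) := by
  constructor
  · intro u v; rw [Matrix.one_apply]; positivity
  · intro u; simp [Matrix.one_apply]

lemma stoch_mul [Fintype V] {A B : Matrix V V ℝ} (hA : IsStochastic A) (hB : IsStochastic B) :
    IsStochastic (A * B) := by
  constructor
  · intro u v; rw [Matrix.mul_apply]
    exact Finset.sum_nonneg fun x _ => mul_nonneg (hA.1 u x) (hB.1 x v)
  · intro u
    simp_rw [Matrix.mul_apply]
    rw [Finset.sum_comm]
    simp_rw [← Finset.mul_sum]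
    simp_rw [hB.2]
    simpa using hA.2 u

lemma stoch_pow [Fintype V] [DecidableEq V] {P : Matrix V V ℝ} (hP : IsStochastic P) (t : ℕ) :
    IsStochastic (P ^ t) := by
  induction t with
  | zero => rw [pow_zero]; exact stoch_one
  | succ t ih => rw [pow_succ]; exact stoch_mul ih hP

lemma row_sum_zero [Fintype V] {A : Matrix V V ℝ} (hA : IsStochastic A) (u w : V) :
    ∑ v, (A u v - A w v) = 0 := by
  rw [Finset.sum_sub_distrib, hA.2 u, hA.2 w]; ring

/-- Submultiplicative decay along multiples of tmix. -/
lemma D_pow [Fintype V] [DecidableEq V] {P : Matrix V V ℝ} (hP : IsStochastic P)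
    {tmix : ℕ} {ε : ℝ} (hε : 0 ≤ ε)
    (h2 : ∀ u w, Nn (fun v => (P ^ tmix) u v - (P ^ tmix) w v) ≤ ε) (k : ℕ) :
    ∀ u w, Nn (fun v => (P ^ (k * tmix)) u v - (P ^ (k * tmix)) w v) ≤ ε ^ k := by
  induction k with
  | zero =>
    intro u w
    simpa using Nn_rowdiff_le_one (stoch_one (V := V)) u w
  | succ k ih =>
    intro u w
    have hA : IsStochastic (P ^ (k * tmix)) := stoch_pow hP _
    have hsplit : P ^ ((k+1) * tmix) = P ^ (k * tmix) * P ^ tmix := by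
      rw [← pow_add]; ring_nf
    have hrow : ∀ v, (P ^ ((k+1) * tmix)) u v - (P ^ ((k+1) * tmix)) w v
        = ∑ x, ((P ^ (k * tmix)) u x - (P ^ (k * tmix)) w x) * (P ^ tmix) x v := by
      intro v
      rw [hsplit]
      simp_rw [Matrix.mul_apply, sub_mul]
      rw [Finset.sum_sub_distrib]
    have := keyA (stoch_pow hP tmix) (fun x => (P ^ (k * tmix)) u x - (P ^ (k * tmix)) w x)
      (row_sum_zero hA u w) h2
    calc Nn (fun v => (P ^ ((k+1) * tmix)) u v - (P ^ ((k+1) * tmix)) w v)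
        = Nn (fun v => ∑ x, ((P ^ (k * tmix)) u x - (P ^ (k * tmix)) w x) * (P ^ tmix) x v) := by
          congr 1; funext v; exact hrow v
      _ ≤ Nn (fun x => (P ^ (k * tmix)) u x - (P ^ (k * tmix)) w x) * ε := this
      _ ≤ ε ^ k * ε := mul_le_mul_of_nonneg_right (ih u w) hε
      _ = ε ^ (k+1) := by ring

lemma Nn_prob_diff_le_one [Fintype V] {a b : V → ℝ} (ha0 : ∀ v, 0 ≤ a v) (ha1 : ∑ v, a v = 1)
    (hb0 : ∀ v, 0 ≤ b v) (hb1 : ∑ v, b v = 1) : Nn (fun v => a v - b v) ≤ 1 := by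
  unfold Nn
  have h1 : ∑ v, |a v - b v| ≤ ∑ v, (a v + b v) :=
    Finset.sum_le_sum fun v _ => (abs_sub _ _).trans (by
      rw [abs_of_nonneg (ha0 v), abs_of_nonneg (hb0 v)])
  rw [Finset.sum_add_distrib, ha1, hb1] at h1
  linarith

lemma invariant_pow [Fintype V] [DecidableEq V] {P : Matrix V V ℝ} {p : V → ℝ}
    (hp : ∀ v, ∑ u, p u * P u v = p v) (t : ℕ) :
    ∀ v, ∑ u, p u * (P ^ t) u v = p v := by
  induction t with
  | zero => intro v; simp [Matrix.one_apply]
  | succ t ih =>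
    intro v
    rw [pow_succ]
    simp_rw [Matrix.mul_apply, Finset.mul_sum]
    rw [Finset.sum_comm]
    have : ∀ x, ∑ u, p u * ((P ^ t) u x * P x v) = p x * P x v := by
      intro x
      have : ∑ u, p u * ((P ^ t) u x * P x v) = (∑ u, p u * (P ^ t) u x) * P x v := by
        rw [Finset.sum_mul]; apply Finset.sum_congr rfl; intro u _; ring
      rw [this, ih x]
    simp_rw [this]
    exact hp v

lemma main_ineq [Fintype V] [DecidableEq V] {P Pt : Matrix V V ℝ} {pi pit : V → ℝ} {tmix : ℕ}
    (hP : IsStochastic P) (hPt : IsStochastic Pt)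
    (hpi : InvariantProb P pi) (hpit : InvariantProb Pt pit)
    {ε : ℝ} (hε : 0 ≤ ε)
    (h2 : ∀ u w, Nn (fun v => (P ^ tmix) u v - (P ^ tmix) w v) ≤ ε)
    {W : Finset V} (hW : ∀ u : V, P u ≠ Pt u → u ∈ W) (k : ℕ) :
    Nn (fun v => pit v - pi v) ≤ (k : ℝ) * ((tmix : ℝ) * ∑ w ∈ W, pit w) + ε ^ k := by
  classical
  set S : ℝ := ∑ w ∈ W, pit w with hS
  have hS0 : 0 ≤ S := Finset.sum_nonneg fun w _ => hpit.1 w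
  set q : ℕ → V → ℝ := fun t v => ∑ u, pit u * (P ^ t) u v with hq
  -- step 1 : Nn (pit - q 1) ≤ S
  have hq1 : ∀ v, q 1 v = ∑ u, pit u * P u v := by intro v; simp [hq]
  have hF : Nn (fun v => pit v - q 1 v) ≤ S := by
    have hrow : ∀ v, pit v - q 1 v = ∑ u, pit u * (Pt u v - P u v) := by
      intro v
      rw [hq1 v, ← hpit.2.2 v, ← Finset.sum_sub_distrib]
      apply Finset.sum_congr rfl; intro u _; ring
    have : (fun v => pit v - q 1 v) = fun v => ∑ u, pit u * (Pt u v - P u v) :=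
      funext hrow
    rw [this]
    calc Nn (fun v => ∑ u, pit u * (Pt u v - P u v))
        ≤ ∑ u, Nn (fun v => pit u * (Pt u v - P u v)) := Nn_sum_le _ _
      _ = ∑ u, pit u * Nn (fun v => Pt u v - P u v) := by
          apply Finset.sum_congr rfl; intro u _; exact Nn_smul _ (hpit.1 u) _
      _ ≤ S := by
          rw [hS]
          rw [← Finset.sum_subset (Finset.subset_univ W)
            (f := fun u => pit u * Nn (fun v => Pt u v - P u v))
            (fun x _ hx => by
              have hxe : P x = Pt x := by_contra fun h => hx (hW x h)
              have h0 : Nn (fun v => Pt x v - P x v) = 0 := by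
                have hfe : (fun v => Pt x v - P x v) = fun _ => (0:ℝ) := by
                  funext v; rw [hxe]; ring
                rw [hfe]; simp [Nn]
              show pit x * Nn (fun v => Pt x v - P x v) = 0
              rw [h0]; ring)]
          apply Finset.sum_le_sum
          intro u _
          have h1 : Nn (fun v => Pt u v - P u v) ≤ 1 :=
            Nn_prob_diff_le_one (hPt.1 u) (hPt.2 u) (hP.1 u) (hP.2 u)
          nlinarith [hpit.1 u, Nn_nonneg (fun v => Pt u v - P u v)]
  -- sum of pit - q 1 is zero
  have hz1 : ∑ v, (pit v - q 1 v) = 0 := by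
    rw [Finset.sum_sub_distrib, hpit.2.1]
    have : ∑ v, q 1 v = 1 := by
      calc ∑ v, q 1 v = ∑ v, ∑ u, pit u * P u v := by simp_rw [hq1]
        _ = ∑ u, ∑ v, pit u * P u v := Finset.sum_comm
        _ = ∑ u, pit u * ∑ v, P u v := by
            apply Finset.sum_congr rfl; intro u _; rw [Finset.mul_sum]
        _ = 1 := by simp_rw [hP.2, mul_one]; exact hpit.2.1
    rw [this]; ring
  -- step 2 : telescope
  have hqrec : ∀ t v, q t v - q (t+1) v = ∑ x, (pit x - q 1 x) * (P ^ t) x v := by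
    intro t v
    have h1 : q (t+1) v = ∑ x, q 1 x * (P ^ t) x v := by
      have hpow : P ^ (t+1) = P * P ^ t := by rw [← pow_succ']
      simp only [hq, hpow, Matrix.mul_apply, Finset.mul_sum, pow_one]
      rw [Finset.sum_comm]
      apply Finset.sum_congr rfl; intro x _
      rw [Finset.sum_mul]
      apply Finset.sum_congr rfl; intro u _; ring
    rw [h1]
    simp only [hq]
    rw [← Finset.sum_sub_distrib]
    apply Finset.sum_congr rfl; intro x _; ring
  have hstep : ∀ t, Nn (fun v => q t v - q (t+1) v) ≤ S := by
    intro t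
    have : (fun v => q t v - q (t+1) v) = fun v => ∑ x, (pit x - q 1 x) * (P ^ t) x v :=
      funext (hqrec t)
    rw [this]
    have := keyA (stoch_pow hP t) (fun x => pit x - q 1 x) hz1
      (fun u w => Nn_rowdiff_le_one (stoch_pow hP t) u w)
    calc Nn (fun v => ∑ x, (pit x - q 1 x) * (P ^ t) x v)
        ≤ Nn (fun x => pit x - q 1 x) * 1 := this
      _ ≤ S := by rw [mul_one]; exact hF
  have htel : ∀ t : ℕ, Nn (fun v => pit v - q t v) ≤ (t : ℝ) * S := by
    intro t
    induction t with
    | zero =>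
      have : (fun v => pit v - q 0 v) = fun _ => (0:ℝ) := by
        funext v; simp [hq, Matrix.one_apply]
      rw [this]; simp [Nn]
    | succ t ih =>
      have hdecomp : (fun v => pit v - q (t+1) v)
          = fun v => (pit v - q t v) + (q t v - q (t+1) v) := by funext v; ring
      rw [hdecomp]
      calc Nn (fun v => (pit v - q t v) + (q t v - q (t+1) v))
          ≤ Nn (fun v => pit v - q t v) + Nn (fun v => q t v - q (t+1) v) := Nn_add_le _ _
        _ ≤ (t : ℝ) * S + S := add_le_add ih (hstep t)
        _ = ((t+1 : ℕ) : ℝ) * S := by push_cast; ring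
  -- step 3 : mixing
  have hmix : Nn (fun v => q (k * tmix) v - pi v) ≤ ε ^ k := by
    have hrow : ∀ v, q (k * tmix) v - pi v
        = ∑ u, (pit u - pi u) * (P ^ (k * tmix)) u v := by
      intro v
      rw [← invariant_pow hpi.2.2 (k * tmix) v]
      simp only [hq]
      rw [← Finset.sum_sub_distrib]
      apply Finset.sum_congr rfl; intro u _; ring
    have hz2 : ∑ v, (pit v - pi v) = 0 := by
      rw [Finset.sum_sub_distrib, hpit.2.1, hpi.2.1]; ring
    have := keyA (stoch_pow hP (k * tmix)) (fun u => pit u - pi u) hz2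
      (D_pow hP hε h2 k)
    have hle1 : Nn (fun u => pit u - pi u) ≤ 1 :=
      Nn_prob_diff_le_one hpit.1 hpit.2.1 hpi.1 hpi.2.1
    calc Nn (fun v => q (k * tmix) v - pi v)
        = Nn (fun v => ∑ u, (pit u - pi u) * (P ^ (k * tmix)) u v) := by
          congr 1; funext v; exact hrow v
      _ ≤ Nn (fun u => pit u - pi u) * ε ^ k := this
      _ ≤ ε ^ k := by nlinarith [pow_nonneg hε k, Nn_nonneg (fun u => pit u - pi u)]
  -- combine
  have hdecomp : (fun v => pit v - pi v)
      = fun v => (pit v - q (k * tmix) v) + (q (k * tmix) v - pi v) := by funext v; ring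
  rw [hdecomp]
  calc Nn (fun v => (pit v - q (k * tmix) v) + (q (k * tmix) v - pi v))
      ≤ Nn (fun v => pit v - q (k * tmix) v) + Nn (fun v => q (k * tmix) v - pi v) :=
        Nn_add_le _ _
    _ ≤ ((k * tmix : ℕ) : ℝ) * S + ε ^ k := add_le_add (htel (k * tmix)) hmix
    _ = (k : ℝ) * ((tmix : ℝ) * S) + ε ^ k := by push_cast; ring

lemma xstar_le_half : xstar ≤ 1/2 := by
  set f : ℝ → ℝ := fun x => x * Real.log (Real.exp 2 / x) with hf
  have hcont : ContinuousOn f (Set.Icc (1/8 : ℝ) (1/2)) := by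
    apply ContinuousOn.mul continuousOn_id
    apply ContinuousOn.log
    · exact ContinuousOn.div continuousOn_const continuousOn_id
        (fun x hx => by have := hx.1; norm_num; linarith)
    · intro x hx
      have hx1 := hx.1
      have : (0:ℝ) < Real.exp 2 / x := div_pos (Real.exp_pos 2) (by linarith)
      linarith
  have hlo : f (1/8) ≤ 1 := by
    have : Real.exp 2 / (1/8 : ℝ) = 8 * Real.exp 2 := by ring
    rw [hf]; simp only [this]
    rw [Real.log_mul (by norm_num) (Real.exp_ne_zero 2), Real.log_exp]
    have h8 : Real.log 8 = 3 * Real.log 2 := by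
      have : (8:ℝ) = 2 ^ (3:ℕ) := by norm_num
      rw [this, Real.log_pow]; push_cast; ring
    rw [h8]
    have := Real.log_two_lt_d9
    nlinarith
  have hhi : 1 ≤ f (1/2) := by
    have : Real.exp 2 / (1/2 : ℝ) = 2 * Real.exp 2 := by ring
    rw [hf]; simp only [this]
    rw [Real.log_mul (by norm_num) (Real.exp_ne_zero 2), Real.log_exp]
    have := Real.log_pos (by norm_num : (1:ℝ) < 2)
    nlinarith
  have hsub := intermediate_value_Icc (by norm_num : (1/8:ℝ) ≤ 1/2) hcont
  have h1 : (1:ℝ) ∈ Set.Icc (f (1/8)) (f (1/2)) := ⟨hlo, hhi⟩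
  obtain ⟨c, hc, hfc⟩ := hsub h1
  have : xstar ≤ c := by
    apply csInf_le
    · exact ⟨0, fun y hy => le_of_lt hy.1⟩
    · exact ⟨by linarith [hc.1], hfc⟩
  linarith [hc.2]

theorem stmt0' [Fintype V] (P Pt : Matrix V V ℝ) (pi pit : V → ℝ) (tmix : ℕ)
    (hP : IsStochastic P) (hPt : IsStochastic Pt)
    (hpi : InvariantProb P pi) (hpit : InvariantProb Pt pit)
    (htmix1 : 1 ≤ tmix)
    (htmix2 : ∀ u v : V, tvDist ((P ^ tmix) u) ((P ^ tmix) v) ≤ 1 / Real.exp 1)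
    (W : Finset V) (hW : ∀ u : V, P u ≠ Pt u → u ∈ W) :
    tvDist pit pi ≤ Psi ((tmix : ℝ) * ∑ w ∈ W, pit w) := by
  classical
  set ε : ℝ := Real.exp (-1) with hεdef
  have hε : 0 ≤ ε := (Real.exp_pos _).le
  have hε1 : ε < 1 := Real.exp_lt_one_iff.mpr (by norm_num)
  have h2 : ∀ u w, Nn (fun v => (P ^ tmix) u v - (P ^ tmix) w v) ≤ ε := by
    intro u w
    have h := htmix2 u w
    have he : (1 : ℝ) / Real.exp 1 = ε := by
      rw [hεdef, Real.exp_neg, one_div]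
    rw [he] at h
    exact h
  set S : ℝ := ∑ w ∈ W, pit w with hS
  have hS0 : 0 ≤ S := Finset.sum_nonneg fun w _ => hpit.1 w
  set b : ℝ := (tmix : ℝ) * S with hb
  have hb0 : 0 ≤ b := mul_nonneg (Nat.cast_nonneg _) hS0
  have key : ∀ k : ℕ, tvDist pit pi ≤ (k : ℝ) * b + ε ^ k := fun k =>
    main_ineq hP hPt hpi hpit hε h2 hW k
  have htv : tvDist pit pi = Nn (fun v => pit v - pi v) := rfl
  by_cases hbx : b ≤ xstar
  · unfold Psi
    rw [if_pos hbx]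
    rcases eq_or_lt_of_le hb0 with hb0' | hbpos
    · -- b = 0
      have hzero : tvDist pit pi ≤ 0 := by
        have htend : Filter.Tendsto (fun k : ℕ => ε ^ k) Filter.atTop (nhds 0) :=
          tendsto_pow_atTop_nhds_zero_of_lt_one hε hε1
        apply ge_of_tendsto' htend
        intro k
        have := key k
        rw [← hb0'] at this
        simpa using this
      rw [← hb0', zero_mul]
      exact hzero
    · -- 0 < b
      have hblt : b < 1 := by
        have := xstar_le_half
        linarith
      have hlogb : Real.log b < 0 := Real.log_neg hbpos hblt
      set L : ℝ := -Real.log b with hL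
      have hL0 : 0 < L := by rw [hL]; linarith
      set k : ℕ := ⌈L⌉₊ with hk
      have hk1 : L ≤ (k : ℝ) := Nat.le_ceil L
      have hk2 : (k : ℝ) < L + 1 := Nat.ceil_lt_add_one hL0.le
      have hεk : ε ^ k = Real.exp (-(k : ℝ)) := by
        rw [hεdef, ← Real.exp_nat_mul]
        norm_num
      have hεkb : ε ^ k ≤ b := by
        rw [hεk]
        have : Real.exp (-(k:ℝ)) ≤ Real.exp (-L) := Real.exp_le_exp.mpr (by linarith)
        have h2 : Real.exp (-L) = b := by
          rw [hL, neg_neg, Real.exp_log hbpos]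
        linarith
      have hlog : Real.log (Real.exp 2 / b) = 2 + L := by
        rw [Real.log_div (Real.exp_ne_zero 2) (ne_of_gt hbpos), Real.log_exp, hL]
        ring
      rw [hlog]
      have := key k
      nlinarith
  · unfold Psi
    rw [if_neg hbx]
    rw [htv]
    exact Nn_prob_diff_le_one hpit.1 hpit.2.1 hpi.1 hpi.2.1


/-- Lemma 1 of the paper. If `P` is irreducible with invariant
probability vector `pi` and mixing time `tmix`, `pit` is an invariant probability
vector of `Pt`, and `W ⊇ supp(Pt - P)`, then `‖pit - pi‖ ≤ Ψ(tmix · pit(W))`. -/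
theorem stmt0 [Fintype V] (P Pt : Matrix V V ℝ) (pi pit : V → ℝ) (tmix : ℕ)
    (hP : IsStochastic P) (hPt : IsStochastic Pt) (hirr : IrreducibleMatrix P)
    (hpi : InvariantProb P pi) (hpit : InvariantProb Pt pit)
    (htmix1 : 1 ≤ tmix)
    (htmix2 : ∀ u v : V, tvDist ((P ^ tmix) u) ((P ^ tmix) v) ≤ 1 / Real.exp 1)
    (htmix3 : ∀ s : ℕ, 1 ≤ s →
      (∀ u v : V, tvDist ((P ^ s) u) ((P ^ s) v) ≤ 1 / Real.exp 1) → tmix ≤ s)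
    (W : Finset V) (hW : ∀ u : V, P u ≠ Pt u → u ∈ W) :
    tvDist pit pi ≤ Psi ((tmix : ℝ) * ∑ w ∈ W, pit w) := by
  classical
  exact stmt0' P Pt pi pit tmix hP hPt hpi hpit htmix1 htmix2 W hW
end

section
/- Let P̃ be a stochastic matrix on a finite set 𝒱 with invariant probability vector π̃, and let W ⊆ 𝒱 with W ≠ 𝒱. Suppose (τ^u)_{u∈𝒱} is a family of nonnegative real numbers satisfying τ^u = 0 for u ∈ W and τ^u = 1 + Σ_{v∈𝒱} P̃_{uv} τ^v for u ∈ 𝒱∖W, and set τ* := min_{u∈𝒱∖W} τ^u. Then π̃(W) · γ̃_W · τ* ≤ 1, where π̃(W) := Σ_{w∈W} π̃_w and γ̃_W is the exit probability from W. -/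
open scoped Classical BigOperators
open Finset

variable {V : Type*}

open Fin.NatCast

noncomputable def psi [Fintype V] (P : Matrix V V ℝ) (W : Finset V) (tau : V → ℝ) (w : V) (k : ℕ) : ℝ :=
  ∑ ξ ∈ Finset.univ.filter (fun ξ : Fin (k + 1) → V =>
      ξ 0 = w ∧ (∀ l : ℕ, 0 < l → l < k → ξ l ∈ W) ∧ ξ k ∉ W),
    (∏ l ∈ Finset.range k, P (ξ l) (ξ (l + 1))) * tau (ξ k)

lemma psi_nonneg [Fintype V] (P : Matrix V V ℝ) (W : Finset V) (tau : V → ℝ)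
    (hP : ∀ u v, 0 ≤ P u v) (htau : ∀ u, 0 ≤ tau u) (w : V) (k : ℕ) :
    0 ≤ psi P W tau w k :=
  Finset.sum_nonneg fun _ _ =>
    mul_nonneg (Finset.prod_nonneg fun _ _ => hP _ _) (htau _)

lemma psi_ge_phi [Fintype V] (P : Matrix V V ℝ) (W : Finset V) (tau : V → ℝ)
    (hP : ∀ u v, 0 ≤ P u v) (c : ℝ) (hc : ∀ u ∉ W, c ≤ tau u) (w : V) (k : ℕ) :
    c * phi P W w k ≤ psi P W tau w k := by
  unfold phi psi
  rw [Finset.mul_sum]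
  apply Finset.sum_le_sum
  intro ξ hξ
  simp only [Finset.mem_filter] at hξ
  rw [mul_comm]
  exact mul_le_mul_of_nonneg_left (hc _ hξ.2.2.2) (Finset.prod_nonneg fun l _ => hP _ _)

lemma psi_one [Fintype V] (P : Matrix V V ℝ) (W : Finset V) (tau : V → ℝ) (w : V) :
    psi P W tau w 1 = ∑ v ∈ Finset.univ.filter (· ∉ W), P w v * tau v := by
  unfold psi
  apply Finset.sum_nbij' (i := fun ξ => ξ 1) (j := fun v => ![w, v])
  · intro ξ hξ
    simp only [Finset.mem_filter] at hξ ⊢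
    have : ((1 : ℕ) : Fin 2) = 1 := by norm_num
    rw [this] at hξ
    exact ⟨Finset.mem_univ _, hξ.2.2.2⟩
  · intro v hv
    simp only [Finset.mem_filter] at hv ⊢
    refine ⟨Finset.mem_univ _, rfl, fun l hl hl' => absurd hl' (by omega), ?_⟩
    have : ((1 : ℕ) : Fin 2) = 1 := by norm_num
    rw [this]
    simpa using hv.2
  · intro ξ hξ
    simp only [Finset.mem_filter] at hξ
    funext x
    fin_cases x <;> simp [hξ.2.1]
  · intro v hv
    simp
  · intro ξ hξ
    simp only [Finset.mem_filter] at hξ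
    have h1 : ((1 : ℕ) : Fin 2) = 1 := by norm_num
    rw [Finset.prod_range_one, h1]
    have h0 : ((0 : ℕ) : Fin 2) = 0 := by norm_num
    rw [h0, hξ.2.1]
    norm_num

lemma cast_succ_aux {k : ℕ} (m : ℕ) (h : m ≤ k) :
    ((m + 1 : ℕ) : Fin (k + 2)) = Fin.succ ((m : ℕ) : Fin (k + 1)) := by
  apply Fin.ext
  simp only [Fin.val_natCast, Fin.val_succ]
  rw [Nat.mod_eq_of_lt (by omega), Nat.mod_eq_of_lt (by omega)]

lemma cast_zero_aux {k : ℕ} : ((0 : ℕ) : Fin (k + 1)) = 0 := by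
  apply Fin.ext
  simp

lemma cast_add_one_aux {n : ℕ} (m : ℕ) :
    ((m : ℕ) : Fin (n + 1)) + 1 = ((m + 1 : ℕ) : Fin (n + 1)) := by
  push_cast
  ring

lemma psi_succ [Fintype V] (P : Matrix V V ℝ) (W : Finset V) (tau : V → ℝ) (w : V)
    (k : ℕ) (hk : 1 ≤ k) :
    psi P W tau w (k + 1) = ∑ u ∈ W, P w u * psi P W tau u k := by
  unfold psi
  simp_rw [Finset.mul_sum, cast_add_one_aux]
  rw [Finset.sum_sigma']
  symm
  apply Finset.sum_nbij'
    (j := fun ξ => (⟨ξ ((1 : ℕ) : Fin (k + 2)), fun x : Fin (k + 1) => ξ x.succ⟩ :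
      Σ _ : V, Fin (k + 1) → V))
    (i := fun p => Fin.cons w p.2)
  · rintro ⟨u, ξ'⟩ hp
    obtain ⟨hu, hξ'⟩ := Finset.mem_sigma.1 hp
    simp only [Finset.mem_filter, Finset.mem_univ, true_and] at hξ' ⊢
    obtain ⟨h0, hmid, hlast⟩ := hξ'
    refine ⟨Fin.cons_zero _ _, ?_, ?_⟩
    · intro l hl hl'
      obtain ⟨m, rfl⟩ : ∃ m, l = m + 1 := ⟨l - 1, by omega⟩
      rw [cast_succ_aux m (by omega), Fin.cons_succ]
      rcases Nat.eq_zero_or_pos m with hm | hm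
      · subst hm
        rw [cast_zero_aux, h0]; exact hu
      · exact hmid m hm (by omega)
    · rw [cast_succ_aux k le_rfl, Fin.cons_succ]
      exact hlast
  · intro ξ hξ
    simp only [Finset.mem_filter, Finset.mem_univ, true_and] at hξ
    obtain ⟨h0, hmid, hlast⟩ := hξ
    have h1 : ((1 : ℕ) : Fin (k + 2)) = Fin.succ ((0 : ℕ) : Fin (k + 1)) := by
      have := cast_succ_aux (k := k) 0 (by omega)
      simpa using this
    refine Finset.mem_sigma.2 ⟨?_, ?_⟩
    · exact hmid 1 (by omega) (by omega)
    · simp only [Finset.mem_filter, Finset.mem_univ, true_and]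
      refine ⟨?_, ?_, ?_⟩
      · rw [← cast_zero_aux (k := k), ← h1]
      · intro l hl hl'
        rw [← cast_succ_aux l (by omega)]
        exact hmid (l + 1) (by omega) (by omega)
      · rw [← cast_succ_aux k le_rfl]
        exact hlast
  · rintro ⟨u, ξ'⟩ hp
    obtain ⟨hu, hξ'⟩ := Finset.mem_sigma.1 hp
    simp only [Finset.mem_filter, Finset.mem_univ, true_and] at hξ'
    have h1 : ((1 : ℕ) : Fin (k + 2)) = Fin.succ ((0 : ℕ) : Fin (k + 1)) := by
      have := cast_succ_aux (k := k) 0 (by omega)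
      simpa using this
    have hfst : (Fin.cons w ξ' : Fin (k + 2) → V) ((1 : ℕ) : Fin (k + 2)) = u := by
      rw [h1, Fin.cons_succ, cast_zero_aux, hξ'.1]
    refine Sigma.ext hfst ?_
    simp only
    apply heq_of_eq
    funext x
    rw [Fin.cons_succ]
  · intro ξ hξ
    simp only [Finset.mem_filter, Finset.mem_univ, true_and] at hξ
    funext x
    refine Fin.cases ?_ ?_ x
    · rw [Fin.cons_zero, ← hξ.1]
    · intro x'
      rw [Fin.cons_succ]
  · rintro ⟨u, ξ'⟩ hp
    obtain ⟨hu, hξ'⟩ := Finset.mem_sigma.1 hp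
    simp only [Finset.mem_filter, Finset.mem_univ, true_and] at hξ'
    simp only
    rw [Finset.prod_range_succ']
    have e0 : (Fin.cons w ξ' : Fin (k + 2) → V) ((0 : ℕ) : Fin (k + 2)) = w := by
      rw [show ((0 : ℕ) : Fin (k + 2)) = 0 from cast_zero_aux, Fin.cons_zero]
    have es : ∀ m : ℕ, m ≤ k →
        (Fin.cons w ξ' : Fin (k + 2) → V) ((m + 1 : ℕ) : Fin (k + 2))
          = ξ' ((m : ℕ) : Fin (k + 1)) := by
      intro m hm
      rw [cast_succ_aux m hm, Fin.cons_succ]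
    have hprod : ∀ l ∈ Finset.range k,
        P ((Fin.cons w ξ' : Fin (k + 2) → V) ((l + 1 : ℕ) : Fin (k + 2)))
          ((Fin.cons w ξ' : Fin (k + 2) → V) ((l + 1 + 1 : ℕ) : Fin (k + 2)))
        = P (ξ' ((l : ℕ) : Fin (k + 1))) (ξ' ((l + 1 : ℕ) : Fin (k + 1))) := by
      intro l hl
      rw [Finset.mem_range] at hl
      rw [es l (by omega), es (l + 1) (by omega)]
    rw [Finset.prod_congr rfl hprod, e0, show (0 + 1 : ℕ) = 1 from rfl]
    have e1 : (Fin.cons w ξ' : Fin (k + 2) → V) ((1 : ℕ) : Fin (k + 2)) = u := by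
      have := es 0 (by omega)
      simpa [cast_zero_aux, hξ'.1] using this
    rw [e1, es k le_rfl]
    ring

/-- Lemma 2 of the paper: `pit(W) · γ̃_W · τ*_W ≤ 1`. -/
theorem stmt1 [Fintype V] (Pt : Matrix V V ℝ) (pit : V → ℝ) (W : Finset V)
    (hPt : IsStochastic Pt) (hpit : InvariantProb Pt pit) (hW : W ≠ Finset.univ)
    (tau : V → ℝ) (htau_nonneg : ∀ u, 0 ≤ tau u)
    (htau0 : ∀ u ∈ W, tau u = 0)
    (htau1 : ∀ u ∉ W, tau u = 1 + ∑ v, Pt u v * tau v) :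
    (∑ w ∈ W, pit w) * exitProb Pt pit W * entranceTime tau W ≤ 1 := by
  obtain ⟨hPnn, hProw⟩ := hPt
  obtain ⟨hpnn, hpsum, hpinv⟩ := hpit
  set tstar := entranceTime tau W with htstar_def
  set piW := ∑ w ∈ W, pit w with hpiW_def
  obtain ⟨u0, hu0⟩ : ∃ u, u ∉ W := by
    by_contra h
    push_neg at h
    exact hW (Finset.eq_univ_iff_forall.2 h)
  have hne : {x : ℝ | ∃ u, u ∉ W ∧ x = tau u}.Nonempty := ⟨tau u0, u0, hu0, rfl⟩
  have hbdd : BddBelow {x : ℝ | ∃ u, u ∉ W ∧ x = tau u} := by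
    refine ⟨0, ?_⟩
    rintro x ⟨u, _, rfl⟩
    exact htau_nonneg u
  have htstar_nonneg : 0 ≤ tstar := by
    apply le_csInf hne
    rintro x ⟨u, _, rfl⟩
    exact htau_nonneg u
  have htstar_le : ∀ u ∉ W, tstar ≤ tau u := fun u hu => csInf_le hbdd ⟨u, hu, rfl⟩
  have hpiW_nonneg : 0 ≤ piW := Finset.sum_nonneg fun w _ => hpnn w
  have hpsi1 : ∀ w, psi Pt W tau w 1 = ∑ v, Pt w v * tau v := by
    intro w
    rw [psi_one]
    apply Finset.sum_subset (Finset.filter_subset _ _)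
    intro v _ hv
    simp only [Finset.mem_filter, Finset.mem_univ, true_and, not_not] at hv
    rw [htau0 v hv, mul_zero]
  have h3 : ∑ v ∈ Finset.univ.filter (· ∉ W), pit v = 1 - piW := by
    have hsplit := Finset.sum_filter_add_sum_filter_not Finset.univ (· ∈ W) pit
    have hfW : Finset.univ.filter (· ∈ W) = W := Finset.filter_univ_mem W
    rw [hfW, hpsum] at hsplit
    linarith [hsplit]
  have hbase : ∑ w ∈ W, pit w * psi Pt W tau w 1 = 1 - piW := by
    have h1 : ∑ u, pit u * (∑ v, Pt u v * tau v) = ∑ v, pit v * tau v := by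
      calc ∑ u, pit u * (∑ v, Pt u v * tau v)
          = ∑ u, ∑ v, pit u * Pt u v * tau v := by
            apply Finset.sum_congr rfl
            intro u _
            rw [Finset.mul_sum]
            apply Finset.sum_congr rfl
            intro v _; ring
        _ = ∑ v, ∑ u, pit u * Pt u v * tau v := Finset.sum_comm
        _ = ∑ v, (∑ u, pit u * Pt u v) * tau v := by
            apply Finset.sum_congr rfl
            intro v _
            rw [Finset.sum_mul]
        _ = ∑ v, pit v * tau v := by
            apply Finset.sum_congr rfl
            intro v _
            rw [hpinv v]
    have h2 : ∑ v, pit v * tau v = ∑ v ∈ Finset.univ.filter (· ∉ W), pit v * tau v := by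
      symm
      apply Finset.sum_subset (Finset.filter_subset _ _)
      intro v _ hv
      simp only [Finset.mem_filter, Finset.mem_univ, true_and, not_not] at hv
      rw [htau0 v hv, mul_zero]
    have h2' : ∑ v ∈ Finset.univ.filter (· ∉ W), pit v * tau v
        = ∑ v ∈ Finset.univ.filter (· ∉ W), pit v * (1 + ∑ u, Pt v u * tau u) := by
      apply Finset.sum_congr rfl
      intro v hv
      simp only [Finset.mem_filter, Finset.mem_univ, true_and] at hv
      rw [htau1 v hv]
    have hsplitS := Finset.sum_filter_add_sum_filter_not Finset.univ (· ∈ W)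
      (fun u => pit u * (∑ v, Pt u v * tau v))
    have hfW : Finset.univ.filter (· ∈ W) = W := Finset.filter_univ_mem W
    rw [hfW] at hsplitS
    have hexp : ∑ v ∈ Finset.univ.filter (· ∉ W), pit v * (1 + ∑ u, Pt v u * tau u)
        = (1 - piW) + ∑ v ∈ Finset.univ.filter (· ∉ W), pit v * (∑ u, Pt v u * tau u) := by
      rw [← h3, ← Finset.sum_add_distrib]
      apply Finset.sum_congr rfl
      intro v _; ring
    have hnotmem : (Finset.univ.filter fun u => ¬ u ∈ W) = Finset.univ.filter (· ∉ W) := rfl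
    simp_rw [hpsi1]
    rw [← hnotmem] at h2 h2' hexp
    linarith [hsplitS, h1, h2, h2', hexp]
  have hsub : ∀ u, ∑ w ∈ W, pit w * Pt w u ≤ pit u := by
    intro u
    rw [← hpinv u]
    apply Finset.sum_le_sum_of_subset_of_nonneg (Finset.subset_univ W)
    intro i _ _
    exact mul_nonneg (hpnn i) (hPnn i u)
  have hkey : ∀ k, 1 ≤ k → ∑ w ∈ W, pit w * psi Pt W tau w k ≤ 1 - piW := by
    intro k hk
    induction k, hk using Nat.le_induction with
    | base => rw [hbase]
    | succ k hk ih =>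
      calc ∑ w ∈ W, pit w * psi Pt W tau w (k + 1)
          = ∑ w ∈ W, pit w * ∑ u ∈ W, Pt w u * psi Pt W tau u k := by
            apply Finset.sum_congr rfl
            intro w _
            rw [psi_succ Pt W tau w k hk]
        _ = ∑ u ∈ W, (∑ w ∈ W, pit w * Pt w u) * psi Pt W tau u k := by
            simp_rw [Finset.mul_sum, Finset.sum_mul]
            rw [Finset.sum_comm]
            apply Finset.sum_congr rfl; intro u _
            apply Finset.sum_congr rfl; intro w _; ring
        _ ≤ ∑ u ∈ W, pit u * psi Pt W tau u k := by
            apply Finset.sum_le_sum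
            intro u _
            exact mul_le_mul_of_nonneg_right (hsub u)
              (psi_nonneg Pt W tau hPnn htau_nonneg u k)
        _ ≤ 1 - piW := ih
  rcases eq_or_lt_of_le hpiW_nonneg with hpiW0 | hpiW_pos
  · rw [← hpiW0, zero_mul, zero_mul]; norm_num
  rcases eq_or_lt_of_le htstar_nonneg with htstar0 | htstar_pos
  · rw [← htstar0, mul_zero]; norm_num
  have hc : 0 < piW * tstar := mul_pos hpiW_pos htstar_pos
  have hFne : (W.filter fun w => 0 < pit w).Nonempty := by
    by_contra h
    rw [Finset.not_nonempty_iff_eq_empty, Finset.filter_eq_empty_iff] at h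
    have : piW = 0 := Finset.sum_eq_zero fun w hw => le_antisymm (by
      have := h hw; push_neg at this; exact this) (hpnn w)
    linarith
  have hAux : ∀ t : ℕ, 1 ≤ t → exitProbAux Pt pit W t ≤ (piW * tstar)⁻¹ := by
    intro t ht
    have htpos : (0 : ℝ) < t := by exact_mod_cast ht
    set A := exitProbAux Pt pit W t with hA_def
    have hA : A = (W.filter fun w => 0 < pit w).inf' hFne
        (fun w => (1 / (t : ℝ)) * ∑ k ∈ Finset.Icc 1 t, phi Pt W w k) := by
      rw [hA_def, exitProbAux, dif_pos hFne]
    have hA_le : ∀ w ∈ W.filter fun w => 0 < pit w,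
        (t : ℝ) * A ≤ ∑ k ∈ Finset.Icc 1 t, phi Pt W w k := by
      intro w hw
      have h5 := Finset.inf'_le
        (fun w => (1 / (t : ℝ)) * ∑ k ∈ Finset.Icc 1 t, phi Pt W w k) hw
      rw [← hA] at h5
      calc (t : ℝ) * A ≤ (t : ℝ) * ((1 / (t : ℝ)) * ∑ k ∈ Finset.Icc 1 t, phi Pt W w k) :=
            mul_le_mul_of_nonneg_left h5 (le_of_lt htpos)
        _ = ∑ k ∈ Finset.Icc 1 t, phi Pt W w k := by field_simp
    have hmain : piW * ((t : ℝ) * A) * tstar ≤ (t : ℝ) * (1 - piW) := by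
      have step1 : piW * ((t : ℝ) * A) * tstar
          ≤ ∑ w ∈ W, pit w * ∑ k ∈ Finset.Icc 1 t, psi Pt W tau w k := by
        rw [hpiW_def, Finset.sum_mul, Finset.sum_mul]
        apply Finset.sum_le_sum
        intro w hw
        by_cases hwpos : 0 < pit w
        · have hwF : w ∈ W.filter fun w => 0 < pit w := Finset.mem_filter.2 ⟨hw, hwpos⟩
          calc pit w * ((t : ℝ) * A) * tstar
              ≤ pit w * (∑ k ∈ Finset.Icc 1 t, phi Pt W w k) * tstar := by
                apply mul_le_mul_of_nonneg_right _ htstar_nonneg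
                exact mul_le_mul_of_nonneg_left (hA_le w hwF) (hpnn w)
            _ = pit w * ∑ k ∈ Finset.Icc 1 t, tstar * phi Pt W w k := by
                rw [Finset.mul_sum, Finset.mul_sum, Finset.sum_mul]
                apply Finset.sum_congr rfl; intro k _; ring
            _ ≤ pit w * ∑ k ∈ Finset.Icc 1 t, psi Pt W tau w k := by
                apply mul_le_mul_of_nonneg_left _ (hpnn w)
                exact Finset.sum_le_sum fun k _ =>
                  psi_ge_phi Pt W tau hPnn tstar htstar_le w k
        · have hw0 : pit w = 0 := le_antisymm (not_lt.1 hwpos) (hpnn w)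
          rw [hw0]
          simp
      have step2 : ∑ w ∈ W, pit w * ∑ k ∈ Finset.Icc 1 t, psi Pt W tau w k
          ≤ (t : ℝ) * (1 - piW) := by
        calc ∑ w ∈ W, pit w * ∑ k ∈ Finset.Icc 1 t, psi Pt W tau w k
            = ∑ k ∈ Finset.Icc 1 t, ∑ w ∈ W, pit w * psi Pt W tau w k := by
              simp_rw [Finset.mul_sum]
              exact Finset.sum_comm
          _ ≤ ∑ k ∈ Finset.Icc 1 t, (1 - piW) := by
              apply Finset.sum_le_sum
              intro k hk
              exact hkey k (Finset.mem_Icc.1 hk).1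
          _ = (t : ℝ) * (1 - piW) := by
              rw [Finset.sum_const, Nat.card_Icc]
              simp [nsmul_eq_mul]
      linarith
    have h6 : (t : ℝ) * (A * (piW * tstar)) ≤ (t : ℝ) * 1 := by nlinarith
    have h7 : A * (piW * tstar) ≤ 1 := le_of_mul_le_mul_left h6 htpos
    rw [inv_eq_one_div, le_div_iff₀ hc]
    exact h7
  have hSne : {x : ℝ | ∃ t : ℕ, 1 ≤ t ∧ x = exitProbAux Pt pit W t}.Nonempty :=
    ⟨exitProbAux Pt pit W 1, 1, le_rfl, rfl⟩
  have hsup : exitProb Pt pit W ≤ (piW * tstar)⁻¹ := by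
    apply csSup_le hSne
    rintro x ⟨t, ht, rfl⟩
    exact hAux t ht
  calc piW * exitProb Pt pit W * tstar = exitProb Pt pit W * (piW * tstar) := by ring
    _ ≤ (piW * tstar)⁻¹ * (piW * tstar) := mul_le_mul_of_nonneg_right hsup (le_of_lt hc)
    _ = 1 := inv_mul_cancel₀ (ne_of_gt hc)
end

section
/- Let P and P̃ be stochastic matrices on a finite set 𝒱. Suppose P is irreducible with invariant probability vector π and finite mixing time t_mix, and let π̃ be an invariant probability vector of P̃. Let W ⊆ 𝒱 with supp(P̃ − P) ⊆ W and W ≠ 𝒱, let τ*_W be the entrance time on W for P, and let γ̃_W be the exit probability from W for P̃ and π̃. If γ̃_W · τ*_W > 0, then ‖π̃ − π‖ ≤ Ψ( t_mix / (γ̃_W · τ*_W) ). -/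
open scoped Classical BigOperators
open Finset

variable {V : Type*}

open Fin.NatCast

lemma fin_cast_mk {n : ℕ} (l : ℕ) (h : l < n + 1) : ((l : ℕ) : Fin (n + 1)) = ⟨l, h⟩ :=
  Fin.ext (by simp [Fin.val_natCast, Nat.mod_eq_of_lt h])

lemma fin_cast_add_one {n : ℕ} (l : ℕ) (h : l + 1 < n + 1) :
    ((l : ℕ) : Fin (n + 1)) + 1 = ⟨l + 1, h⟩ := by
  apply Fin.ext
  have h1 : l % (n+1) = l := Nat.mod_eq_of_lt (by omega)
  have h2 : (1:ℕ) % (n+1) = 1 := Nat.mod_eq_of_lt (by omega)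
  rw [Fin.val_add, Fin.val_natCast, Fin.val_one', h1, h2, Nat.mod_eq_of_lt h]

lemma fin_zero_mk {n : ℕ} (h : 0 < n + 1) : (0 : Fin (n + 1)) = ⟨0, h⟩ := rfl

lemma apply_mk_congr {α : Sort*} {n : ℕ} (ξ : Fin n → α) {a b : ℕ} (ha : a < n) (hb : b < n)
    (h : a = b) : ξ ⟨a, ha⟩ = ξ ⟨b, hb⟩ := by subst h; rfl

lemma phi_nonneg [Fintype V] {P : Matrix V V ℝ} (hP : ∀ u v, 0 ≤ P u v)
    (W : Finset V) (w : V) (k : ℕ) : 0 ≤ phi P W w k := by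
  unfold phi
  apply Finset.sum_nonneg
  intro ξ _
  exact Finset.prod_nonneg fun l _ => hP _ _

lemma phi_one [Fintype V] (P : Matrix V V ℝ) (W : Finset V) (w : V) :
    phi P W w 1 = ∑ v ∈ Finset.univ.filter (fun v => v ∉ W), P w v := by
  unfold phi
  apply Finset.sum_nbij' (i := fun ξ : Fin 2 → V => ξ 1) (j := fun v => ![w, v])
  · intro ξ hξ
    simp only [Finset.mem_filter, Finset.mem_univ, true_and] at hξ ⊢
    have := hξ.2.2
    rwa [show ((1:ℕ) : Fin 2) = 1 by norm_num] at this
  · intro v hv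
    simp only [Finset.mem_filter, Finset.mem_univ, true_and] at hv ⊢
    refine ⟨rfl, fun l hl hl' => absurd hl' (by omega), ?_⟩
    rwa [show ((1:ℕ) : Fin 2) = 1 by norm_num]
  · intro ξ hξ
    simp only [Finset.mem_filter, Finset.mem_univ, true_and] at hξ
    funext a
    fin_cases a
    · simpa using hξ.1.symm
    · simp
  · intro v _
    simp
  · intro ξ hξ
    simp only [Finset.mem_filter, Finset.mem_univ, true_and] at hξ
    rw [Finset.prod_range_one]
    rw [show ((0:ℕ) : Fin 2) = 0 by norm_num, hξ.1,
      show ((0 : Fin 2) + 1) = 1 by norm_num]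

set_option maxHeartbeats 1000000 in
lemma phi_succ [Fintype V] (P : Matrix V V ℝ) (W : Finset V) (w : V) (k : ℕ) (hk : 1 ≤ k) :
    phi P W w (k + 1) = ∑ v ∈ W, P w v * phi P W v k := by
  unfold phi
  have hrhs : ∑ v ∈ W, P w v * (∑ ξ ∈ Finset.univ.filter (fun ξ : Fin (k + 1) → V =>
      ξ 0 = v ∧ (∀ l : ℕ, 0 < l → l < k → ξ l ∈ W) ∧ ξ k ∉ W),
        ∏ l ∈ Finset.range k, P (ξ l) (ξ (l + 1)))
      = ∑ p ∈ W.sigma (fun v => Finset.univ.filter (fun ξ : Fin (k + 1) → V =>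
          ξ 0 = v ∧ (∀ l : ℕ, 0 < l → l < k → ξ l ∈ W) ∧ ξ k ∉ W)),
          P w p.1 * ∏ l ∈ Finset.range k, P (p.2 l) (p.2 (l + 1)) := by
    rw [Finset.sum_sigma]
    apply Finset.sum_congr rfl
    intro v _
    rw [Finset.mul_sum]
  rw [hrhs]
  apply Finset.sum_nbij'
    (i := fun ξ : Fin (k + 2) → V =>
      (⟨ξ ((1:ℕ) : Fin (k+2)), fun a : Fin (k+1) => ξ ⟨a.val + 1, by omega⟩⟩ :
        Σ _ : V, Fin (k + 1) → V))
    (j := fun p : Σ _ : V, Fin (k + 1) → V =>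
      fun a : Fin (k + 2) => if h : a.val = 0 then w else p.2 ⟨a.val - 1, by omega⟩)
  · -- i maps into sigma set
    intro ξ hξ
    simp only [Finset.mem_filter, Finset.mem_univ, true_and] at hξ
    obtain ⟨h0, hmid, hend⟩ := hξ
    rw [Finset.mem_sigma]
    refine ⟨hmid 1 one_pos (by omega), ?_⟩
    simp only [Finset.mem_filter, Finset.mem_univ, true_and]
    refine ⟨?_, ?_, ?_⟩
    · show ξ ⟨(0 : Fin (k+1)).val + 1, _⟩ = ξ ((1:ℕ) : Fin (k+2))
      rw [fin_cast_mk 1 (by omega)]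
      congr 1
    · intro l hl hl'
      show ξ ⟨((l : Fin (k+1))).val + 1, by omega⟩ ∈ W
      have := hmid (l + 1) (by omega) (by omega)
      rw [fin_cast_mk (l+1) (by omega)] at this
      rwa [apply_mk_congr ξ _ _
        (by rw [Fin.val_natCast, Nat.mod_eq_of_lt (show l < k+1 by omega)])]
    · show ξ ⟨((k : Fin (k+1))).val + 1, by omega⟩ ∉ W
      rw [fin_cast_mk (k+1) (by omega)] at hend
      rwa [apply_mk_congr ξ _ _
        (by rw [Fin.val_natCast, Nat.mod_eq_of_lt (show k < k+1 by omega)])]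
  · -- j maps into filter set
    intro p hp
    obtain ⟨v, η⟩ := p
    rw [Finset.mem_sigma] at hp
    obtain ⟨hpW, hp2⟩ := hp
    simp only [Finset.mem_filter, Finset.mem_univ, true_and] at hp2 ⊢
    obtain ⟨h0, hmid, hend⟩ := hp2
    refine ⟨?_, ?_, ?_⟩
    · show dite ((0 : Fin (k+2)).val = 0) _ _ = w
      simp
    · intro l hl hl'
      rw [fin_cast_mk l (by omega)]
      show dite ((l:ℕ) = 0) _ _ ∈ W
      rw [dif_neg hl.ne']
      rcases eq_or_lt_of_le (show 1 ≤ l from hl) with h1 | h1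
      · have hl1 : l - 1 = 0 := by omega
        simp only [hl1]
        have he : (⟨0, by omega⟩ : Fin (k+1)) = 0 := rfl
        rw [he, h0]
        exact hpW
      · have := hmid (l - 1) (by omega) (by omega)
        rw [fin_cast_mk (l-1) (by omega)] at this
        exact this
    · rw [fin_cast_mk (k+1) (by omega)]
      show dite ((k+1:ℕ) = 0) _ _ ∉ W
      rw [dif_neg (by omega)]
      rw [fin_cast_mk k (by omega)] at hend
      simpa using hend
  · -- left inverse
    intro ξ hξ
    simp only [Finset.mem_filter, Finset.mem_univ, true_and] at hξ
    funext a
    by_cases h : a.val = 0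
    · show dite (a.val = 0) _ _ = ξ a
      rw [dif_pos h]
      have ha : a = 0 := Fin.ext (by simpa using h)
      rw [ha]
      exact hξ.1.symm
    · show dite (a.val = 0) _ _ = ξ a
      rw [dif_neg h]
      show ξ ⟨(a.val - 1) + 1, _⟩ = ξ a
      congr 1
      exact Fin.ext (by simp; omega)
  · -- right inverse
    intro p hp
    obtain ⟨v, η⟩ := p
    rw [Finset.mem_sigma] at hp
    obtain ⟨hpW, hp2⟩ := hp
    simp only [Finset.mem_filter, Finset.mem_univ, true_and] at hp2
    refine Sigma.ext ?_ (heq_of_eq ?_)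
    · show (if h : (((1:ℕ) : Fin (k+2))).val = 0 then w else η ⟨(((1:ℕ) : Fin (k+2))).val - 1, by omega⟩) = v
      simp only [fin_cast_mk 1 (show 1 < k + 2 by omega)]
      show dite ((1:ℕ) = 0) _ _ = v
      rw [dif_neg (by omega)]
      have he : (⟨1 - 1, by omega⟩ : Fin (k+1)) = 0 := rfl
      rw [he, hp2.1]
    · funext a
      show (if h : ((⟨a.val + 1, by omega⟩ : Fin (k+2))).val = 0 then w
          else η ⟨((⟨a.val + 1, by omega⟩ : Fin (k+2))).val - 1, by omega⟩) = η a
      rw [dif_neg (Nat.succ_ne_zero a.val)]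
      exact congrArg η (Fin.ext (Nat.succ_sub_one a.val))
  · -- values agree
    intro ξ hξ
    simp only [Finset.mem_filter, Finset.mem_univ, true_and] at hξ
    rw [Finset.prod_range_succ', mul_comm]
    congr 1
    · show P (ξ ((0:ℕ) : Fin (k+2))) (ξ (((0:ℕ) : Fin (k+2)) + 1)) = P w (ξ ((1:ℕ) : Fin (k+2)))
      rw [fin_cast_add_one 0 (by omega), fin_cast_mk 1 (by omega),
        show ((0:ℕ) : Fin (k+2)) = 0 from by norm_num, hξ.1]
    · apply Finset.prod_congr rfl
      intro l hl
      rw [Finset.mem_range] at hl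
      show P (ξ ((l+1 : ℕ) : Fin (k+2))) (ξ (((l+1:ℕ) : Fin (k+2)) + 1))
          = P (ξ ⟨(((l:ℕ) : Fin (k+1))).val + 1, Nat.add_lt_add_right (Fin.is_lt _) 1⟩)
              (ξ ⟨((((l:ℕ) : Fin (k+1))) + 1).val + 1, Nat.add_lt_add_right (Fin.is_lt _) 1⟩)
      have e1 : ((l+1 : ℕ) : Fin (k+2)) = ⟨l+1, by omega⟩ := fin_cast_mk _ _
      have e2 : ((l+1 : ℕ) : Fin (k+2)) + 1 = ⟨l+2, by omega⟩ := fin_cast_add_one (l+1) (by omega)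
      have e3 : (((l:ℕ) : Fin (k+1))).val = l := by
        rw [Fin.val_natCast]; exact Nat.mod_eq_of_lt (by omega)
      have e4 : (((l:ℕ) : Fin (k+1))) + 1 = ⟨l+1, by omega⟩ := fin_cast_add_one l (by omega)
      have e5 : ((((l:ℕ) : Fin (k+1))) + 1).val + 1 = l + 2 := by rw [e4]
      have e6 : (((l:ℕ) : Fin (k+1))).val + 1 = l + 1 := by rw [e3]
      rw [e2, e1,
        apply_mk_congr ξ (Nat.add_lt_add_right (Fin.is_lt _) 1) (show l + 1 < k + 2 by omega) e6,
        apply_mk_congr ξ (Nat.add_lt_add_right (Fin.is_lt _) 1) (show l + 2 < k + 2 by omega) e5]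

/- ===== auxiliary lemmas ===== -/

section AuxLemmas
variable [Fintype V]

lemma tvDist_nonneg' (a b : V → ℝ) : 0 ≤ tvDist a b := by
  unfold tvDist; positivity

lemma tvDist_triangle (a b c : V → ℝ) : tvDist a c ≤ tvDist a b + tvDist b c := by
  unfold tvDist
  rw [← mul_add, ← Finset.sum_add_distrib]
  gcongr with v _
  calc |a v - c v| = |(a v - b v) + (b v - c v)| := by ring_nf
  _ ≤ |a v - b v| + |b v - c v| := abs_add_le _ _

lemma tvDist_le_one {a b : V → ℝ} (ha0 : ∀ v, 0 ≤ a v) (ha1 : ∑ v, a v = 1)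
    (hb0 : ∀ v, 0 ≤ b v) (hb1 : ∑ v, b v = 1) : tvDist a b ≤ 1 := by
  unfold tvDist
  have : ∑ v, |a v - b v| ≤ ∑ v, (a v + b v) := by
    apply Finset.sum_le_sum
    intro v _
    calc |a v - b v| ≤ |a v| + |b v| := abs_sub _ _
    _ = a v + b v := by rw [abs_of_nonneg (ha0 v), abs_of_nonneg (hb0 v)]
  rw [Finset.sum_add_distrib, ha1, hb1] at this
  linarith

lemma isStochastic_one : IsStochastic (1 : Matrix V V ℝ) := by
  constructor
  · intro u v
    rw [Matrix.one_apply]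
    split <;> norm_num
  · intro u
    simp [Matrix.one_apply]

lemma isStochastic_mul {A B : Matrix V V ℝ} (hA : IsStochastic A) (hB : IsStochastic B) :
    IsStochastic (A * B) := by
  constructor
  · intro u v
    rw [Matrix.mul_apply]
    exact Finset.sum_nonneg fun k _ => mul_nonneg (hA.1 u k) (hB.1 k v)
  · intro u
    simp only [Matrix.mul_apply]
    rw [Finset.sum_comm]
    calc ∑ k, ∑ v, A u k * B k v = ∑ k, A u k * ∑ v, B k v := by
          simp [Finset.mul_sum]
    _ = 1 := by simp [hB.2, hA.2 u]

lemma isStochastic_pow {A : Matrix V V ℝ} (hA : IsStochastic A) (n : ℕ) :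
    IsStochastic (A ^ n) := by
  induction n with
  | zero => simpa [pow_zero] using isStochastic_one
  | succ m ih => rw [pow_succ]; exact isStochastic_mul ih hA

lemma vecMul_prob {A : Matrix V V ℝ} (hA : IsStochastic A) {a : V → ℝ}
    (ha0 : ∀ v, 0 ≤ a v) (ha1 : ∑ v, a v = 1) :
    (∀ v, 0 ≤ Matrix.vecMul a A v) ∧ ∑ v, Matrix.vecMul a A v = 1 := by
  constructor
  · intro v
    exact Finset.sum_nonneg fun u _ => mul_nonneg (ha0 u) (hA.1 u v)
  · simp only [Matrix.vecMul, dotProduct]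
    rw [Finset.sum_comm]
    calc ∑ u, ∑ v, a u * A u v = ∑ u, a u * ∑ v, A u v := by simp [Finset.mul_sum]
    _ = 1 := by simp [hA.2, ha1]

lemma inv_pair {Pt : Matrix V V ℝ} {p : V → ℝ}
    (hinv : ∀ v, ∑ u, p u * Pt u v = p v) (s : ℕ) (f : V → ℝ) :
    ∑ u, p u * (Pt ^ s).mulVec f u = ∑ u, p u * f u := by
  induction s with
  | zero => simp [Matrix.one_mulVec]
  | succ n ih =>
    rw [pow_succ', ← Matrix.mulVec_mulVec]
    calc ∑ u, p u * Pt.mulVec ((Pt ^ n).mulVec f) u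
        = ∑ u, ∑ v, p u * (Pt u v * (Pt ^ n).mulVec f v) := by
          apply Finset.sum_congr rfl; intro u _
          simp [Matrix.mulVec, dotProduct, Finset.mul_sum]
    _ = ∑ v, (∑ u, p u * Pt u v) * (Pt ^ n).mulVec f v := by
          rw [Finset.sum_comm]
          apply Finset.sum_congr rfl; intro v _
          rw [Finset.sum_mul]
          apply Finset.sum_congr rfl; intro u _; ring
    _ = ∑ v, p v * (Pt ^ n).mulVec f v := by
          apply Finset.sum_congr rfl; intro v _; rw [hinv v]
    _ = ∑ u, p u * f u := ih

lemma mulVec_nonneg {A : Matrix V V ℝ} (hA : ∀ u v, 0 ≤ A u v) {f : V → ℝ}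
    (hf : ∀ v, 0 ≤ f v) (u : V) : 0 ≤ A.mulVec f u :=
  Finset.sum_nonneg fun v _ => mul_nonneg (hA u v) (hf v)

lemma tvDist_contract {A : Matrix V V ℝ} {μ ν : V → ℝ}
    (hμ1 : ∑ v, μ v = 1) (hν1 : ∑ v, ν v = 1) {ε : ℝ}
    (hrow : ∀ u v, tvDist (A u) (A v) ≤ ε) :
    tvDist (Matrix.vecMul μ A) (Matrix.vecMul ν A) ≤ ε * tvDist μ ν := by
  set cp : V → ℝ := fun u => max (μ u - ν u) 0 with hcp
  set cm : V → ℝ := fun u => max (ν u - μ u) 0 with hcm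
  have hcp0 : ∀ u, 0 ≤ cp u := fun u => le_max_right _ _
  have hcm0 : ∀ u, 0 ≤ cm u := fun u => le_max_right _ _
  have hdiff : ∀ u, cp u - cm u = μ u - ν u := by
    intro u; simp only [hcp, hcm]
    rcases le_total (μ u) (ν u) with h | h
    · rw [max_eq_right (by linarith), max_eq_left (by linarith)]; ring
    · rw [max_eq_left (by linarith), max_eq_right (by linarith)]; ring
  have habs : ∀ u, cp u + cm u = |μ u - ν u| := by
    intro u; simp only [hcp, hcm]
    rcases le_total (μ u) (ν u) with h | h
    · rw [max_eq_right (by linarith), max_eq_left (by linarith), abs_of_nonpos (by linarith)]; ring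
    · rw [max_eq_left (by linarith), max_eq_right (by linarith), abs_of_nonneg (by linarith)]; ring
  set β := tvDist μ ν with hβ
  have hβ0 : 0 ≤ β := tvDist_nonneg' μ ν
  have hsumeq : ∑ u, cp u = ∑ u, cm u := by
    have : ∑ u, (cp u - cm u) = 0 := by
      simp only [hdiff]; rw [Finset.sum_sub_distrib, hμ1, hν1]; ring
    rw [Finset.sum_sub_distrib] at this; linarith
  have hsumcp : ∑ u, cp u = β := by
    have h2 : ∑ u, (cp u + cm u) = 2 * β := by
      simp only [habs]; rw [hβ]; unfold tvDist; ring
    rw [Finset.sum_add_distrib, ← hsumeq] at h2; linarith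
  rcases eq_or_lt_of_le hβ0 with h0 | hβpos
  · have hz : ∀ u, |μ u - ν u| = 0 := by
      intro u
      have hs : ∑ v, |μ v - ν v| = 0 := by
        have : β = (1/2) * ∑ v, |μ v - ν v| := hβ
        rw [← h0] at this
        linarith
      have := Finset.sum_eq_zero_iff_of_nonneg (fun v _ => abs_nonneg (μ v - ν v)) |>.mp hs
      exact this u (Finset.mem_univ u)
    have hμν : μ = ν := by
      funext u; have := abs_eq_zero.mp (hz u); linarith
    rw [hμν, ← h0]
    unfold tvDist; simp
  · set ρ : V → ℝ := fun w => β⁻¹ * ∑ u, cm u * A u w with hρ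
    have key1 : ∀ u, ∑ w, |A u w - ρ w| ≤ 2 * ε := by
      intro u
      have hpt : ∀ w, A u w - ρ w = β⁻¹ * ∑ v, cm v * (A u w - A v w) := by
        intro w
        have hh : ∑ v, cm v * (A u w - A v w) = (∑ v, cm v) * A u w - ∑ v, cm v * A v w := by
          rw [Finset.sum_mul, ← Finset.sum_sub_distrib]
          congr 1; funext v; ring
        rw [hh, ← hsumeq, hsumcp]
        simp only [hρ]
        field_simp
      calc ∑ w, |A u w - ρ w| ≤ ∑ w, β⁻¹ * ∑ v, cm v * |A u w - A v w| := by
            apply Finset.sum_le_sum; intro w _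
            rw [hpt w, abs_mul, abs_of_nonneg (by positivity : (0:ℝ) ≤ β⁻¹)]
            apply mul_le_mul_of_nonneg_left _ (by positivity)
            calc |∑ v, cm v * (A u w - A v w)| ≤ ∑ v, |cm v * (A u w - A v w)| :=
                  Finset.abs_sum_le_sum_abs _ _
            _ = ∑ v, cm v * |A u w - A v w| := by
                  apply Finset.sum_congr rfl; intro v _
                  rw [abs_mul, abs_of_nonneg (hcm0 v)]
      _ = β⁻¹ * ∑ v, cm v * ∑ w, |A u w - A v w| := by
            rw [← Finset.mul_sum]; congr 1
            rw [Finset.sum_comm]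
            apply Finset.sum_congr rfl; intro v _
            rw [Finset.mul_sum]
      _ ≤ β⁻¹ * ∑ v, cm v * (2 * ε) := by
            apply mul_le_mul_of_nonneg_left _ (by positivity)
            apply Finset.sum_le_sum; intro v _
            apply mul_le_mul_of_nonneg_left _ (hcm0 v)
            have := hrow u v; unfold tvDist at this; linarith
      _ = 2 * ε := by
            rw [← Finset.sum_mul, ← hsumeq, hsumcp]
            field_simp
    have key2 : ∀ w, Matrix.vecMul μ A w - Matrix.vecMul ν A w
        = ∑ u, cp u * (A u w - ρ w) := by
      intro w
      have h1 : ∑ u, cp u * (A u w - ρ w) = ∑ u, cp u * A u w - (∑ u, cp u) * ρ w := by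
        rw [Finset.sum_mul, ← Finset.sum_sub_distrib]
        congr 1; funext u; ring
      have h2 : (∑ u, cp u) * ρ w = ∑ u, cm u * A u w := by
        rw [hsumcp]; simp only [hρ]
        rw [← mul_assoc, mul_inv_cancel₀ (ne_of_gt hβpos), one_mul]
      rw [h1, h2, ← Finset.sum_sub_distrib]
      simp only [Matrix.vecMul, dotProduct]
      rw [← Finset.sum_sub_distrib]
      apply Finset.sum_congr rfl; intro u _
      rw [← sub_mul, ← sub_mul, hdiff u]
    unfold tvDist
    calc (1/2) * ∑ w, |Matrix.vecMul μ A w - Matrix.vecMul ν A w|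
        ≤ (1/2) * ∑ w, ∑ u, cp u * |A u w - ρ w| := by
          apply mul_le_mul_of_nonneg_left _ (by norm_num)
          apply Finset.sum_le_sum; intro w _
          rw [key2 w]
          calc |∑ u, cp u * (A u w - ρ w)| ≤ ∑ u, |cp u * (A u w - ρ w)| :=
                Finset.abs_sum_le_sum_abs _ _
          _ = ∑ u, cp u * |A u w - ρ w| := by
                apply Finset.sum_congr rfl; intro u _
                rw [abs_mul, abs_of_nonneg (hcp0 u)]
    _ = (1/2) * ∑ u, cp u * ∑ w, |A u w - ρ w| := by
          congr 1; rw [Finset.sum_comm]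
          apply Finset.sum_congr rfl; intro u _; rw [Finset.mul_sum]
    _ ≤ (1/2) * ∑ u, cp u * (2 * ε) := by
          apply mul_le_mul_of_nonneg_left _ (by norm_num)
          apply Finset.sum_le_sum; intro u _
          exact mul_le_mul_of_nonneg_left (key1 u) (hcp0 u)
    _ = ε * β := by rw [← Finset.sum_mul, hsumcp]; ring

end AuxLemmas

/- ===== xstar facts ===== -/

lemma exp_one_ge_two : (2:ℝ) ≤ Real.exp 1 := by
  have := Real.add_one_le_exp 1; linarith

lemma exp_two_ge_four : (4:ℝ) ≤ Real.exp 2 := by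
  have h1 : Real.exp 2 = Real.exp 1 * Real.exp 1 := by
    rw [← Real.exp_add]; norm_num
  nlinarith [exp_one_ge_two]

lemma xstar_le : xstar ≤ Real.exp (-1) := by
  set f : ℝ → ℝ := fun x => x * Real.log (Real.exp 2 / x) with hf
  have hab : Real.exp (-2) ≤ Real.exp (-1) := Real.exp_le_exp.mpr (by norm_num)
  have hapos : 0 < Real.exp (-2) := Real.exp_pos _
  have hcont : ContinuousOn f (Set.Icc (Real.exp (-2)) (Real.exp (-1))) := by
    apply ContinuousOn.mul continuousOn_id
    apply ContinuousOn.log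
    · exact continuousOn_const.div continuousOn_id
        (fun x hx => ne_of_gt (lt_of_lt_of_le hapos hx.1))
    · intro x hx
      exact ne_of_gt (div_pos (Real.exp_pos 2) (lt_of_lt_of_le hapos hx.1))
  have hfa : f (Real.exp (-2)) ≤ 1 := by
    have h1 : Real.exp 2 / Real.exp (-2) = Real.exp 4 := by
      rw [← Real.exp_sub]; norm_num
    have h0 : f (Real.exp (-2)) = Real.exp (-2) * 4 := by
      simp only [hf, h1, Real.log_exp]
    rw [h0, Real.exp_neg]
    have h2 : (Real.exp 2)⁻¹ ≤ 4⁻¹ := by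
      apply inv_anti₀ (by norm_num) exp_two_ge_four
    nlinarith [Real.exp_pos 2]
  have hfb : 1 ≤ f (Real.exp (-1)) := by
    have h1 : Real.exp 2 / Real.exp (-1) = Real.exp 3 := by
      rw [← Real.exp_sub]; norm_num
    have h0 : f (Real.exp (-1)) = Real.exp (-1) * 3 := by
      simp only [hf, h1, Real.log_exp]
    rw [h0, Real.exp_neg]
    have h2 : Real.exp 1 ≤ 3 := by
      have := Real.exp_one_lt_d9; linarith
    have h3 : (3:ℝ)⁻¹ ≤ (Real.exp 1)⁻¹ := by
      apply inv_anti₀ (Real.exp_pos 1) h2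
    nlinarith [Real.exp_pos 1]
  have h1mem : (1:ℝ) ∈ Set.Icc (f (Real.exp (-2))) (f (Real.exp (-1))) := ⟨hfa, hfb⟩
  obtain ⟨c₀, hc₀mem, hc₀⟩ := intermediate_value_Icc hab hcont h1mem
  have hc₀S : c₀ ∈ {x : ℝ | 0 < x ∧ x * Real.log (Real.exp 2 / x) = 1} :=
    ⟨lt_of_lt_of_le hapos hc₀mem.1, hc₀⟩
  calc xstar ≤ c₀ := csInf_le ⟨0, fun x hx => hx.1.le⟩ hc₀S
  _ ≤ Real.exp (-1) := hc₀mem.2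

lemma xstar_lt_one : xstar < 1 :=
  lt_of_le_of_lt xstar_le (by rw [← Real.exp_zero]; exact Real.exp_lt_exp.mpr (by norm_num))

lemma phi_le_pow [Fintype V] {Pt : Matrix V V ℝ} (hPt : IsStochastic Pt) (W : Finset V)
    (k : ℕ) (hk : 1 ≤ k) (w : V) (hw : w ∈ W) :
    phi Pt W w k ≤ (Pt ^ (k - 1)).mulVec
      (fun v => if v ∈ W then ∑ u ∈ Finset.univ.filter (fun x => x ∉ W), Pt v u else 0) w := by
  set g : V → ℝ :=
    fun v => if v ∈ W then ∑ u ∈ Finset.univ.filter (fun x => x ∉ W), Pt v u else 0 with hg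
  have hg0 : ∀ v, 0 ≤ g v := by
    intro v; rw [hg]; dsimp only
    split
    · exact Finset.sum_nonneg fun u _ => hPt.1 v u
    · exact le_refl 0
  induction k generalizing w with
  | zero => omega
  | succ n ih =>
    by_cases hn : n = 0
    · subst hn
      rw [phi_one]
      have : g w = ∑ u ∈ Finset.univ.filter (fun x => x ∉ W), Pt w u := by
        rw [hg]; dsimp only; rw [if_pos hw]
      simp only [Nat.sub_self, pow_zero, Matrix.one_mulVec]
      rw [this]
    · have hn1 : 1 ≤ n := by omega
      rw [phi_succ Pt W w n hn1]
      have hpow0 : ∀ u v, 0 ≤ (Pt ^ (n - 1)) u v := (isStochastic_pow hPt (n-1)).1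
      calc ∑ v ∈ W, Pt w v * phi Pt W v n
          ≤ ∑ v ∈ W, Pt w v * (Pt ^ (n - 1)).mulVec g v := by
            apply Finset.sum_le_sum; intro v hv
            exact mul_le_mul_of_nonneg_left (ih hn1 v hv) (hPt.1 w v)
      _ ≤ ∑ v, Pt w v * (Pt ^ (n - 1)).mulVec g v := by
            apply Finset.sum_le_sum_of_subset_of_nonneg (Finset.subset_univ W)
            intro u _ _
            exact mul_nonneg (hPt.1 w u) (mulVec_nonneg hpow0 hg0 u)
      _ = (Pt ^ n).mulVec g w := by
            have hps : Pt ^ n = Pt * Pt ^ (n - 1) := by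
              conv_lhs => rw [show n = (n - 1) + 1 from by omega]
              rw [pow_succ']
            rw [hps, ← Matrix.mulVec_mulVec]
            rfl
      _ = (Pt ^ (n + 1 - 1)).mulVec g w := by norm_num

/-- Theorem 1 (main theorem) of the paper:
`‖pit - pi‖ ≤ Ψ(tmix / (γ̃_W · τ*_W))`. -/
theorem stmt2 [Fintype V] (P Pt : Matrix V V ℝ) (pi pit : V → ℝ) (tmix : ℕ)
    (hP : IsStochastic P) (hPt : IsStochastic Pt) (hirr : IrreducibleMatrix P)
    (hpi : InvariantProb P pi) (hpit : InvariantProb Pt pit)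
    (htmix1 : 1 ≤ tmix)
    (htmix2 : ∀ u v : V, tvDist ((P ^ tmix) u) ((P ^ tmix) v) ≤ 1 / Real.exp 1)
    (htmix3 : ∀ s : ℕ, 1 ≤ s →
      (∀ u v : V, tvDist ((P ^ s) u) ((P ^ s) v) ≤ 1 / Real.exp 1) → tmix ≤ s)
    (W : Finset V) (hW : ∀ u : V, P u ≠ Pt u → u ∈ W) (hWne : W ≠ Finset.univ)
    (tau : V → ℝ) (htau0 : ∀ u ∈ W, tau u = 0)
    (htau1 : ∀ u ∉ W, tau u = 1 + ∑ v, P u v * tau v)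
    (hpos : 0 < exitProb Pt pit W * entranceTime tau W) :
    tvDist pit pi ≤ Psi ((tmix : ℝ) / (exitProb Pt pit W * entranceTime tau W)) := by
  obtain ⟨hP0, hP1⟩ := hP
  obtain ⟨hPt0, hPt1⟩ := hPt
  obtain ⟨hpi0, hpi1, hpi2⟩ := hpi
  obtain ⟨hpit0, hpit1, hpit2⟩ := hpit
  set γ := exitProb Pt pit W with hγdef
  set τ := entranceTime tau W with hτdef
  set c := γ * τ with hcdef
  -- some vertex outside W
  have hexu : ∃ u, u ∉ W := by
    by_contra h; push_neg at h; exact hWne (Finset.eq_univ_iff_forall.mpr h)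
  obtain ⟨u₀, hu₀⟩ := hexu
  have hne : Nonempty V := ⟨u₀⟩
  -- tau is nonnegative and ≥ 1 outside W
  have htau_nonneg : ∀ u, 0 ≤ tau u := by
    obtain ⟨m, _, hmin⟩ := Finset.exists_min_image Finset.univ tau ⟨u₀, Finset.mem_univ u₀⟩
    intro u
    have hm : 0 ≤ tau m := by
      by_contra hneg
      push_neg at hneg
      have hmW : m ∉ W := by
        intro h
        rw [htau0 m h] at hneg
        exact absurd hneg (by norm_num)
      have heq := htau1 m hmW
      have hge : ∑ v, P m v * tau m ≤ ∑ v, P m v * tau v := by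
        apply Finset.sum_le_sum; intro v _
        exact mul_le_mul_of_nonneg_left (hmin v (Finset.mem_univ v)) (hP0 m v)
      rw [← Finset.sum_mul, hP1 m, one_mul] at hge
      linarith
    exact le_trans hm (hmin u (Finset.mem_univ u))
  have htau_ge_one : ∀ u ∉ W, 1 ≤ tau u := by
    intro u hu
    rw [htau1 u hu]
    have : 0 ≤ ∑ v, P u v * tau v :=
      Finset.sum_nonneg fun v _ => mul_nonneg (hP0 u v) (htau_nonneg v)
    linarith
  have hτ1 : (1:ℝ) ≤ τ := by
    rw [hτdef]
    unfold entranceTime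
    apply le_csInf
    · exact ⟨tau u₀, u₀, hu₀, rfl⟩
    · rintro x ⟨u, hu, rfl⟩
      exact htau_ge_one u hu
  have hτpos : (0:ℝ) < τ := lt_of_lt_of_le one_pos hτ1
  have hτ_le : ∀ u ∉ W, τ ≤ tau u := by
    intro u hu
    rw [hτdef]
    unfold entranceTime
    exact csInf_le ⟨1, by rintro x ⟨v, hv, rfl⟩; exact htau_ge_one v hv⟩ ⟨u, hu, rfl⟩
  -- rows off W coincide
  have hrows : ∀ u ∉ W, P u = Pt u := by
    intro u hu
    by_contra h
    exact hu (hW u h)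
  -- the exit weight function g
  set g : V → ℝ :=
    fun v => if v ∈ W then ∑ u ∈ Finset.univ.filter (fun x => x ∉ W), Pt v u else 0 with hgdef
  have hg0 : ∀ v, 0 ≤ g v := by
    intro v; rw [hgdef]; dsimp only
    split
    · exact Finset.sum_nonneg fun u _ => hPt0 v u
    · exact le_refl 0
  -- the key one-step inequality
  have hkey : ∀ u, tau u - 1 + τ * g u ≤ Pt.mulVec tau u := by
    intro u
    by_cases hu : u ∈ W
    · have hmv : Pt.mulVec tau u = ∑ v, Pt u v * tau v := rfl
      have h2 : ∑ v, Pt u v * (if v ∈ W then 0 else τ) ≤ ∑ v, Pt u v * tau v := by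
        apply Finset.sum_le_sum; intro v _
        apply mul_le_mul_of_nonneg_left _ (hPt0 u v)
        split
        · next h => rw [htau0 v h]
        · next h => exact hτ_le v h
      have h3 : ∑ v, Pt u v * (if v ∈ W then 0 else τ)
          = τ * ∑ v ∈ Finset.univ.filter (fun x => x ∉ W), Pt u v := by
        rw [Finset.sum_filter, Finset.mul_sum]
        apply Finset.sum_congr rfl; intro v _
        by_cases hv : v ∈ W
        · simp [hv]
        · simp [hv, mul_comm]
      have hgu : g u = ∑ v ∈ Finset.univ.filter (fun x => x ∉ W), Pt u v := by
        rw [hgdef]; dsimp only; rw [if_pos hu]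
      rw [htau0 u hu, hmv, hgu]
      have := h3 ▸ h2
      linarith
    · have hmv : Pt.mulVec tau u = ∑ v, P u v * tau v := by
        have : Pt u = P u := (hrows u hu).symm
        simp only [Matrix.mulVec, dotProduct, this]
      have hgu : g u = 0 := by
        rw [hgdef]; dsimp only; rw [if_neg hu]
      rw [hmv, hgu, htau1 u hu]
      ring_nf
      linarith [le_refl (∑ v, P u v * tau v)]
  -- pairing with pit: τ * Sg ≤ 1
  set Sg := ∑ u, pit u * g u with hSgdef
  have hSg0 : 0 ≤ Sg :=
    Finset.sum_nonneg fun u _ => mul_nonneg (hpit0 u) (hg0 u)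
  have hpair1 : ∑ u, pit u * Pt.mulVec tau u = ∑ u, pit u * tau u := by
    have := inv_pair hpit2 1 tau
    simpa [pow_one] using this
  have hτSg : τ * Sg ≤ 1 := by
    have hle : ∑ u, pit u * (tau u - 1 + τ * g u) ≤ ∑ u, pit u * Pt.mulVec tau u :=
      Finset.sum_le_sum fun u _ => mul_le_mul_of_nonneg_left (hkey u) (hpit0 u)
    have hexp : ∑ u, pit u * (tau u - 1 + τ * g u)
        = (∑ u, pit u * tau u) - (∑ u, pit u) + τ * Sg := by
      calc ∑ u, pit u * (tau u - 1 + τ * g u)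
          = ∑ u, (pit u * tau u - pit u + τ * (pit u * g u)) := by
            apply Finset.sum_congr rfl; intro u _; ring
      _ = (∑ u, (pit u * tau u - pit u)) + τ * ∑ u, pit u * g u := by
            rw [Finset.sum_add_distrib, Finset.mul_sum]
      _ = (∑ u, pit u * tau u) - (∑ u, pit u) + τ * Sg := by
            rw [Finset.sum_sub_distrib, hSgdef]
    rw [hexp, hpit1, hpair1] at hle
    linarith
  -- piW bound
  set piW := ∑ w ∈ W, pit w with hpiWdef
  have hpiW0 : 0 ≤ piW := Finset.sum_nonneg fun w _ => hpit0 w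
  have hγpiW : γ * piW ≤ Sg := by
    rcases eq_or_lt_of_le hpiW0 with h0 | hposW
    · rw [← h0, mul_zero]; exact hSg0
    · have hγle : γ ≤ Sg / piW := by
        rw [hγdef]
        unfold exitProb
        apply Real.sSup_le _ (by positivity)
        rintro xx ⟨t, ht1, rfl⟩
        rw [le_div_iff₀ hposW]
        have hFne : (W.filter fun w => 0 < pit w).Nonempty := by
          by_contra hne'
          rw [Finset.not_nonempty_iff_eq_empty] at hne'
          have hz : piW = 0 := by
            rw [hpiWdef]
            apply Finset.sum_eq_zero
            intro w hw
            rcases eq_or_lt_of_le (hpit0 w) with h | h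
            · exact h.symm
            · exact absurd (Finset.mem_filter.mpr ⟨hw, h⟩)
                (by rw [hne']; exact Finset.notMem_empty w)
          linarith
        unfold exitProbAux
        rw [dif_pos hFne]
        set e := (W.filter fun w => 0 < pit w).inf' hFne
          (fun w => (1/(t:ℝ)) * ∑ k ∈ Finset.Icc 1 t, phi Pt W w k) with hedef
        have htpos : (0:ℝ) < t := by exact_mod_cast ht1
        calc e * piW = ∑ w ∈ W, pit w * e := by
              rw [hpiWdef, Finset.mul_sum]
              apply Finset.sum_congr rfl; intro w _; ring
        _ ≤ ∑ w ∈ W, pit w * ((1/(t:ℝ)) * ∑ k ∈ Finset.Icc 1 t, phi Pt W w k) := by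
              apply Finset.sum_le_sum; intro w hw
              rcases eq_or_lt_of_le (hpit0 w) with h | h
              · rw [← h, zero_mul, zero_mul]
              · refine mul_le_mul_of_nonneg_left ?_ h.le
                rw [hedef]
                exact Finset.inf'_le _ (Finset.mem_filter.mpr ⟨hw, h⟩)
        _ ≤ ∑ w ∈ W, pit w * ((1/(t:ℝ)) * ∑ k ∈ Finset.Icc 1 t, (Pt ^ (k-1)).mulVec g w) := by
              apply Finset.sum_le_sum; intro w hw
              apply mul_le_mul_of_nonneg_left _ (hpit0 w)
              apply mul_le_mul_of_nonneg_left _ (by positivity)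
              apply Finset.sum_le_sum; intro k hk
              rw [Finset.mem_Icc] at hk
              exact phi_le_pow ⟨hPt0, hPt1⟩ W k hk.1 w hw
        _ = (1/(t:ℝ)) * ∑ k ∈ Finset.Icc 1 t, ∑ w ∈ W, pit w * (Pt ^ (k-1)).mulVec g w := by
              calc ∑ w ∈ W, pit w * ((1/(t:ℝ)) * ∑ k ∈ Finset.Icc 1 t, (Pt ^ (k-1)).mulVec g w)
                  = ∑ w ∈ W, ∑ k ∈ Finset.Icc 1 t, (1/(t:ℝ)) * (pit w * (Pt ^ (k-1)).mulVec g w) := by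
                    apply Finset.sum_congr rfl; intro w _
                    rw [Finset.mul_sum, Finset.mul_sum]
                    apply Finset.sum_congr rfl; intro k _
                    ring
              _ = ∑ k ∈ Finset.Icc 1 t, ∑ w ∈ W, (1/(t:ℝ)) * (pit w * (Pt ^ (k-1)).mulVec g w) :=
                    Finset.sum_comm
              _ = (1/(t:ℝ)) * ∑ k ∈ Finset.Icc 1 t, ∑ w ∈ W, pit w * (Pt ^ (k-1)).mulVec g w := by
                    rw [Finset.mul_sum]
                    apply Finset.sum_congr rfl; intro k _
                    rw [Finset.mul_sum]
        _ ≤ (1/(t:ℝ)) * ∑ k ∈ Finset.Icc 1 t, ∑ u, pit u * (Pt ^ (k-1)).mulVec g u := by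
              apply mul_le_mul_of_nonneg_left _ (by positivity)
              apply Finset.sum_le_sum; intro k _
              apply Finset.sum_le_sum_of_subset_of_nonneg (Finset.subset_univ W)
              intro u _ _
              exact mul_nonneg (hpit0 u)
                (mulVec_nonneg (isStochastic_pow ⟨hPt0, hPt1⟩ (k-1)).1 hg0 u)
        _ = (1/(t:ℝ)) * ∑ k ∈ Finset.Icc 1 t, Sg := by
              congr 1
              apply Finset.sum_congr rfl; intro k _
              rw [inv_pair hpit2 (k-1) g]
        _ = Sg := by
              rw [Finset.sum_const, Nat.card_Icc]
              simp only [Nat.add_sub_cancel, nsmul_eq_mul]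
              field_simp
      calc γ * piW ≤ (Sg/piW) * piW := mul_le_mul_of_nonneg_right hγle hpiW0
      _ = Sg := div_mul_cancel₀ _ (ne_of_gt hposW)
  have hpiWc : piW * c ≤ 1 := by
    calc piW * c = γ * piW * τ := by rw [hcdef]; ring
    _ ≤ Sg * τ := mul_le_mul_of_nonneg_right hγpiW hτpos.le
    _ = τ * Sg := mul_comm _ _
    _ ≤ 1 := hτSg
  -- single perturbation step
  have hstep1 : tvDist pit (Matrix.vecMul pit P) ≤ piW := by
    unfold tvDist
    have hdiff : ∀ v, pit v - Matrix.vecMul pit P v = ∑ u, pit u * (Pt u v - P u v) := by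
      intro v
      conv_lhs => rw [← hpit2 v]
      simp only [Matrix.vecMul, dotProduct]
      rw [← Finset.sum_sub_distrib]
      apply Finset.sum_congr rfl; intro u _; ring
    calc (1/2) * ∑ v, |pit v - Matrix.vecMul pit P v|
        ≤ (1/2) * ∑ v, ∑ u, pit u * |Pt u v - P u v| := by
          apply mul_le_mul_of_nonneg_left _ (by norm_num)
          apply Finset.sum_le_sum; intro v _
          rw [hdiff v]
          calc |∑ u, pit u * (Pt u v - P u v)| ≤ ∑ u, |pit u * (Pt u v - P u v)| :=
                Finset.abs_sum_le_sum_abs _ _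
          _ = ∑ u, pit u * |Pt u v - P u v| := by
                apply Finset.sum_congr rfl; intro u _
                rw [abs_mul, abs_of_nonneg (hpit0 u)]
    _ = (1/2) * ∑ u, pit u * ∑ v, |Pt u v - P u v| := by
          congr 1
          rw [Finset.sum_comm]
          apply Finset.sum_congr rfl; intro u _
          rw [Finset.mul_sum]
    _ = (1/2) * ∑ u ∈ W, pit u * ∑ v, |Pt u v - P u v| := by
          congr 1
          symm
          apply Finset.sum_subset (Finset.subset_univ W)
          intro u _ hu
          rw [hrows u hu]
          simp
    _ ≤ (1/2) * ∑ u ∈ W, pit u * 2 := by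
          apply mul_le_mul_of_nonneg_left _ (by norm_num)
          apply Finset.sum_le_sum; intro u _
          apply mul_le_mul_of_nonneg_left _ (hpit0 u)
          have habs2 : ∑ v, |Pt u v - P u v| ≤ ∑ v, (Pt u v + P u v) := by
            apply Finset.sum_le_sum; intro v _
            calc |Pt u v - P u v| ≤ |Pt u v| + |P u v| := abs_sub _ _
            _ = Pt u v + P u v := by
                  rw [abs_of_nonneg (hPt0 u v), abs_of_nonneg (hP0 u v)]
          rw [Finset.sum_add_distrib, hPt1 u, hP1 u] at habs2
          linarith
    _ = piW := by
          rw [hpiWdef, ← Finset.sum_mul]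
          ring
  -- chain bound
  have hchain : ∀ t : ℕ, tvDist pit (Matrix.vecMul pit (P ^ t)) ≤ t * piW := by
    intro t
    induction t with
    | zero =>
      simp only [pow_zero, Matrix.vecMul_one, Nat.cast_zero, zero_mul]
      unfold tvDist
      simp
    | succ n ih =>
      have h1 : tvDist (Matrix.vecMul pit (P ^ n)) (Matrix.vecMul pit (P ^ (n+1))) ≤ piW := by
        have he : Matrix.vecMul pit (P ^ (n+1)) = Matrix.vecMul (Matrix.vecMul pit P) (P ^ n) := by
          rw [Matrix.vecMul_vecMul, ← pow_succ']
        rw [he]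
        have hrows1 : ∀ u v : V, tvDist ((P ^ n) u) ((P ^ n) v) ≤ 1 := by
          intro u v
          have hs := isStochastic_pow ⟨hP0, hP1⟩ n
          exact tvDist_le_one (fun w => hs.1 u w) (hs.2 u) (fun w => hs.1 v w) (hs.2 v)
        have hprob := vecMul_prob ⟨hP0, hP1⟩ hpit0 hpit1
        calc tvDist (Matrix.vecMul pit (P ^ n)) (Matrix.vecMul (Matrix.vecMul pit P) (P ^ n))
            ≤ 1 * tvDist pit (Matrix.vecMul pit P) := tvDist_contract hpit1 hprob.2 hrows1
        _ ≤ piW := by rw [one_mul]; exact hstep1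
      calc tvDist pit (Matrix.vecMul pit (P ^ (n+1)))
          ≤ tvDist pit (Matrix.vecMul pit (P ^ n))
            + tvDist (Matrix.vecMul pit (P ^ n)) (Matrix.vecMul pit (P ^ (n+1))) :=
            tvDist_triangle _ _ _
      _ ≤ n * piW + piW := add_le_add ih h1
      _ = (n+1 : ℕ) * piW := by push_cast; ring
  -- pi is invariant for powers of P
  have hπP : ∀ t : ℕ, Matrix.vecMul pi (P ^ t) = pi := by
    intro t
    induction t with
    | zero => simp [Matrix.vecMul_one]
    | succ n ih =>
      rw [pow_succ, ← Matrix.vecMul_vecMul, ih]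
      exact funext fun v => hpi2 v
  -- mixing bound
  have hmix : ∀ m : ℕ, tvDist (Matrix.vecMul pit ((P ^ tmix) ^ m))
      (Matrix.vecMul pi ((P ^ tmix) ^ m)) ≤ (1/Real.exp 1) ^ m := by
    intro m
    induction m with
    | zero =>
      simp only [pow_zero, Matrix.vecMul_one]
      exact tvDist_le_one hpit0 hpit1 hpi0 hpi1
    | succ n ih =>
      rw [pow_succ, ← Matrix.vecMul_vecMul, ← Matrix.vecMul_vecMul]
      have hstmix := isStochastic_pow ⟨hP0, hP1⟩ tmix
      have hsn := isStochastic_pow hstmix n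
      have ha := vecMul_prob hsn hpit0 hpit1
      have hb := vecMul_prob hsn hpi0 hpi1
      set a1 := Matrix.vecMul pit ((P ^ tmix) ^ n) with ha1
      set b1 := Matrix.vecMul pi ((P ^ tmix) ^ n) with hb1
      calc tvDist (Matrix.vecMul a1 (P ^ tmix)) (Matrix.vecMul b1 (P ^ tmix)) ≤ (1/Real.exp 1) * tvDist a1 b1 := tvDist_contract ha.2 hb.2 htmix2
      _ ≤ (1/Real.exp 1) * (1/Real.exp 1) ^ n := by
            apply mul_le_mul_of_nonneg_left ih (by positivity)
      _ = (1/Real.exp 1) ^ (n+1) := by ring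
  -- master bound
  have hmain : ∀ m : ℕ, tvDist pit pi ≤ ((tmix : ℝ) * m) * piW + (1/Real.exp 1) ^ m := by
    intro m
    have h1 : tvDist pit (Matrix.vecMul pit (P ^ (tmix * m))) ≤ ((tmix * m : ℕ) : ℝ) * piW :=
      hchain _
    have h2 : tvDist (Matrix.vecMul pit (P ^ (tmix * m))) pi ≤ (1/Real.exp 1) ^ m := by
      have hpm : P ^ (tmix * m) = (P ^ tmix) ^ m := pow_mul P tmix m
      have := hmix m
      rw [← hpm] at this
      rwa [show Matrix.vecMul pi (P ^ (tmix * m)) = pi from hπP _] at this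
    calc tvDist pit pi
        ≤ tvDist pit (Matrix.vecMul pit (P ^ (tmix * m)))
          + tvDist (Matrix.vecMul pit (P ^ (tmix * m))) pi := tvDist_triangle _ _ _
    _ ≤ ((tmix : ℝ) * m) * piW + (1/Real.exp 1) ^ m := by
          apply add_le_add _ h2
          calc tvDist pit (Matrix.vecMul pit (P ^ (tmix * m))) ≤ ((tmix * m : ℕ) : ℝ) * piW := h1
          _ = ((tmix : ℝ) * m) * piW := by push_cast; ring
  -- conclusion
  have hc : (0:ℝ) < c := hpos
  set x := (tmix : ℝ) / c with hxdef
  have htmixpos : (0:ℝ) < tmix := by exact_mod_cast htmix1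
  have hx0 : 0 < x := div_pos htmixpos hc
  by_cases hxx : x ≤ xstar
  · unfold Psi
    rw [if_pos hxx]
    have hxlt1 : x < 1 := lt_of_le_of_lt hxx xstar_lt_one
    have hL : 0 < Real.log x⁻¹ := Real.log_pos ((one_lt_inv₀ hx0).mpr hxlt1)
    set m := ⌈Real.log x⁻¹⌉₊ with hmdef
    have hmub : (m:ℝ) ≤ Real.log x⁻¹ + 1 := (Nat.ceil_lt_add_one hL.le).le
    have hexp : Real.exp (-(m:ℝ)) ≤ x := by
      have h1 : Real.log x⁻¹ ≤ m := Nat.le_ceil _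
      have h2 : Real.exp (-(m:ℝ)) ≤ Real.exp (-(Real.log x⁻¹)) :=
        Real.exp_le_exp.mpr (by linarith)
      have h3 : Real.exp (-(Real.log x⁻¹)) = x := by
        rw [Real.log_inv, neg_neg, Real.exp_log hx0]
      rwa [h3] at h2
    have hεm : (1/Real.exp 1) ^ m = Real.exp (-(m:ℝ)) := by
      rw [one_div, ← Real.exp_neg, ← Real.exp_nat_mul]
      congr 1; ring
    have hmw : ((tmix : ℝ) * m) * piW ≤ m * x := by
      have hpiWle : piW ≤ 1 / c := by rw [le_div_iff₀ hc]; exact hpiWc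
      calc ((tmix : ℝ) * m) * piW ≤ ((tmix : ℝ) * m) * (1/c) := by
            apply mul_le_mul_of_nonneg_left hpiWle (by positivity)
      _ = m * x := by rw [hxdef]; field_simp
    have hlog : Real.log (Real.exp 2 / x) = Real.log x⁻¹ + 2 := by
      rw [Real.log_div (Real.exp_ne_zero 2) (ne_of_gt hx0), Real.log_exp, Real.log_inv]
      ring
    calc tvDist pit pi ≤ ((tmix : ℝ) * m) * piW + (1/Real.exp 1) ^ m := hmain m
    _ ≤ m * x + x := add_le_add hmw (by rw [hεm]; exact hexp)
    _ ≤ (Real.log x⁻¹ + 1) * x + x :=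
          add_le_add_left (mul_le_mul_of_nonneg_right hmub hx0.le) x
    _ = x * (Real.log x⁻¹ + 2) := by ring
    _ = x * Real.log (Real.exp 2 / x) := by rw [hlog]
  · unfold Psi
    rw [if_neg hxx]
    exact tvDist_le_one hpit0 hpit1 hpi0 hpi1
end

section
/- Let Q be a stochastic matrix on a finite set 𝒱, μ a probability vector on 𝒱, β ∈ (0,1), and suppose P := (1−β)·Q + β·𝟙μ is irreducible, where 𝟙μ is the matrix with entry (𝟙μ)_{uv} = μ_v. Let π be the invariant probability vector of P and let W ⊆ 𝒱 be nonempty with W ≠ 𝒱. Then the entrance time satisfies τ*_W ≥ β·Σ_{v∈𝒱} μ_v τ^v_W ≥ β/π(W) − 1, where π(W) := Σ_{w∈W} π_w. -/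
open scoped Classical BigOperators
open Finset

variable {V : Type*}

/-- for irreducible `P = (1-β) Q + β 𝟙μ`, the entrance time satisfies
`τ*_W ≥ β ∑_v μ_v τ^v_W ≥ β/π(W) - 1`. -/
theorem stmt9 [Fintype V] (Q P : Matrix V V ℝ) (mu pi : V → ℝ) (β : ℝ)
    (W : Finset V)
    (hQ : IsStochastic Q) (hmu : (∀ v, 0 ≤ mu v) ∧ ∑ v, mu v = 1)
    (hβ : 0 < β ∧ β < 1)
    (hPdef : ∀ u v, P u v = (1 - β) * Q u v + β * mu v)
    (hirr : IrreducibleMatrix P) (hpi : InvariantProb P pi)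
    (hW1 : W.Nonempty) (hW2 : W ≠ Finset.univ)
    (tau : V → ℝ) (htau0 : ∀ u ∈ W, tau u = 0)
    (htau1 : ∀ u ∉ W, tau u = 1 + ∑ v, P u v * tau v) :
    β * (∑ v, mu v * tau v) ≤ entranceTime tau W ∧
    β / (∑ w ∈ W, pi w) - 1 ≤ β * (∑ v, mu v * tau v) := by
  obtain ⟨hβ0, hβ1⟩ := hβ
  obtain ⟨hμ0, hμ1⟩ := hmu
  obtain ⟨hQ0, hQ1⟩ := hQ
  obtain ⟨hπ0, hπ1, hπinv⟩ := hpi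
  obtain ⟨w0, hw0⟩ := hW1
  have hV : (Finset.univ : Finset V).Nonempty := ⟨w0, Finset.mem_univ w0⟩
  have hP0 : ∀ u v, 0 ≤ P u v := by
    intro u v
    rw [hPdef]
    have := hQ0 u v; have := hμ0 v; nlinarith
  have hP1 : ∀ u, ∑ v, P u v = 1 := by
    intro u
    simp only [hPdef]
    rw [Finset.sum_add_distrib, ← Finset.mul_sum, ← Finset.mul_sum, hQ1, hμ1]
    ring
  -- nonnegativity of tau
  have hτnn : ∀ v, 0 ≤ tau v := by
    by_contra h
    push_neg at h
    obtain ⟨u0, _, hmin⟩ := Finset.exists_min_image Finset.univ tau hV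
    obtain ⟨v, hv⟩ := h
    have hneg : tau u0 < 0 := lt_of_le_of_lt (hmin v (Finset.mem_univ v)) hv
    have hu0W : u0 ∉ W := by
      intro hW
      rw [htau0 u0 hW] at hneg; exact absurd hneg (lt_irrefl 0)
    have heq := htau1 u0 hu0W
    have hge : tau u0 ≤ ∑ v, P u0 v * tau v := by
      calc tau u0 = (∑ v, P u0 v) * tau u0 := by rw [hP1, one_mul]
        _ = ∑ v, P u0 v * tau u0 := by rw [Finset.sum_mul]
        _ ≤ ∑ v, P u0 v * tau v := by
            apply Finset.sum_le_sum
            intro v _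
            exact mul_le_mul_of_nonneg_left (hmin v (Finset.mem_univ v)) (hP0 u0 v)
    linarith
  set S := ∑ v, mu v * tau v with hSdef
  have hS0 : 0 ≤ S := Finset.sum_nonneg fun v _ => mul_nonneg (hμ0 v) (hτnn v)
  have hPent : ∀ u, β * S ≤ ∑ v, P u v * tau v := by
    intro u
    rw [hSdef, Finset.mul_sum]
    apply Finset.sum_le_sum
    intro v _
    have h1 : β * mu v ≤ P u v := by
      rw [hPdef]
      have := hQ0 u v; nlinarith
    calc β * (mu v * tau v) = (β * mu v) * tau v := by ring
      _ ≤ P u v * tau v := mul_le_mul_of_nonneg_right h1 (hτnn v)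
  have hnW : ∃ u, u ∉ W := by
    by_contra h
    push_neg at h
    exact hW2 (Finset.eq_univ_iff_forall.mpr h)
  obtain ⟨u1, hu1⟩ := hnW
  constructor
  · rw [entranceTime]
    apply le_csInf
    · exact ⟨tau u1, u1, hu1, rfl⟩
    rintro x ⟨u, hu, rfl⟩
    rw [htau1 u hu]
    have := hPent u
    linarith
  -- second inequality
  · obtain ⟨v0, _, hmax⟩ := Finset.exists_max_image Finset.univ tau hV
    set M := tau v0 with hMdef
    have hsumP : ∀ u, ∑ v, P u v * tau v = (1 - β) * (∑ v, Q u v * tau v) + β * S := by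
      intro u
      rw [hSdef, Finset.mul_sum, Finset.mul_sum, ← Finset.sum_add_distrib]
      apply Finset.sum_congr rfl
      intro v _
      rw [hPdef]; ring
    have hQτ : ∀ u, ∑ v, Q u v * tau v ≤ M := by
      intro u
      calc ∑ v, Q u v * tau v ≤ ∑ v, Q u v * M := by
            apply Finset.sum_le_sum
            intro v _
            exact mul_le_mul_of_nonneg_left (hmax v (Finset.mem_univ v)) (hQ0 u v)
        _ = M := by rw [← Finset.sum_mul, hQ1, one_mul]
    have hM : β * M ≤ 1 + β * S := by
      by_cases hv0 : v0 ∈ W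
      · rw [← hMdef] at *
        have : M = 0 := htau0 v0 hv0
        rw [this]; nlinarith
      · have heq := htau1 v0 hv0
        rw [hsumP v0] at heq
        have := hQτ v0
        nlinarith
    -- positivity of pi
    have hπexists : ∃ v, 0 < pi v := by
      by_contra h
      push_neg at h
      have : ∑ v, pi v ≤ 0 := Finset.sum_nonpos fun v _ => h v
      linarith
    obtain ⟨v1, hv1⟩ := hπexists
    have hπpos : ∀ v, 0 < pi v := by
      intro v
      have hr := hirr v1 v
      induction hr with
      | refl => exact hv1
      | @tail b c hab hbc ih =>
          have hsum : pi b * P b c ≤ ∑ u, pi u * P u c :=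
            Finset.single_le_sum (fun u _ => mul_nonneg (hπ0 u) (hP0 u c)) (Finset.mem_univ b)
          have : 0 < pi b * P b c := mul_pos ih hbc
          rw [← hπinv c]
          linarith
    have hπW : 0 < ∑ w ∈ W, pi w := by
      have := Finset.single_le_sum (f := pi) (fun w _ => (hπpos w).le) hw0
      linarith [hπpos w0]
    -- key identity
    have hA : ∑ u, pi u * (∑ v, P u v * tau v) = ∑ v, pi v * tau v := by
      simp_rw [Finset.mul_sum]
      rw [Finset.sum_comm]
      refine Finset.sum_congr rfl fun v _ => ?_
      simp_rw [← mul_assoc]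
      rw [← Finset.sum_mul, hπinv v]
    have hτW0 : ∑ u ∈ W, pi u * tau u = 0 :=
      Finset.sum_eq_zero fun u hu => by rw [htau0 u hu, mul_zero]
    have h1 : ∑ u, pi u * (1 + ∑ v, P u v * tau v) = 1 + ∑ v, pi v * tau v := by
      simp_rw [mul_add, mul_one]
      rw [Finset.sum_add_distrib, hπ1, hA]
    have h2 : ∑ u ∈ Wᶜ, pi u * (1 + ∑ v, P u v * tau v) = ∑ u ∈ Wᶜ, pi u * tau u := by
      apply Finset.sum_congr rfl
      intro u hu
      rw [← htau1 u (by simpa using hu)]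
    have h3 : ∑ v, pi v * tau v = ∑ u ∈ Wᶜ, pi u * tau u := by
      rw [← Finset.sum_add_sum_compl W fun u => pi u * tau u, hτW0, zero_add]
    have h4 := Finset.sum_add_sum_compl W fun u => pi u * (1 + ∑ v, P u v * tau v)
    have hB : ∑ u ∈ W, pi u * (1 + ∑ v, P u v * tau v) = 1 := by
      rw [h2] at h4
      rw [h1, h3] at h4
      linarith
    have hbound : ∀ u ∈ W, β * (1 + ∑ v, P u v * tau v) ≤ 1 + β * S := by
      intro u _
      rw [hsumP u]
      have hT := hQτ u
      nlinarith [mul_le_mul_of_nonneg_left hT (mul_nonneg (by linarith : (0:ℝ) ≤ 1 - β) hβ0.le),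
        mul_le_mul_of_nonneg_left hM (by linarith : (0:ℝ) ≤ 1 - β)]
    have hfinal : β ≤ (∑ w ∈ W, pi w) * (1 + β * S) := by
      calc β = β * ∑ u ∈ W, pi u * (1 + ∑ v, P u v * tau v) := by rw [hB, mul_one]
        _ = ∑ u ∈ W, pi u * (β * (1 + ∑ v, P u v * tau v)) := by
            rw [Finset.mul_sum]; apply Finset.sum_congr rfl; intro u _; ring
        _ ≤ ∑ u ∈ W, pi u * (1 + β * S) := by
            apply Finset.sum_le_sum
            intro u hu
            exact mul_le_mul_of_nonneg_left (hbound u hu) (hπ0 u)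
        _ = (∑ w ∈ W, pi w) * (1 + β * S) := by rw [← Finset.sum_mul]
    have : β / (∑ w ∈ W, pi w) ≤ 1 + β * S := by
      rw [div_le_iff₀ hπW]
      nlinarith
    linarith
end

section
/- Let 𝒢 = (𝒱,ℰ) be a connected undirected graph with n := |𝒱| nodes, degrees d_v ≥ 1, and average degree d̄ := (1/n)·Σ_v d_v, and let π be the probability vector π_v = d_v/(n·d̄). Let ℱ ⊆ ℰ and suppose the directed graph 𝒢̃ = (𝒱, ℰ∖ℱ) is strongly connected with out-degrees d̃_v ≥ 1; let P̃ := (I + Q̃)/2 where Q̃_{uv} = 1/d̃_u if (u,v) ∈ ℰ∖ℱ and Q̃_{uv} = 0 otherwise, and let π̃ be the unique invariant probability vector of P̃. Then for every y ∈ ℝ^𝒱, setting ȳ := (1/n)·Σ_v y_v and ỹ := ( Σ_v π̃_v y_v/d̃_v ) / ( Σ_v π̃_v/d̃_v ), one has |ỹ − ȳ| ≤ 2·d̄·‖y‖_∞·( |ℱ|/|ℰ| + ‖π̃ − π‖ ). -/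
open scoped Classical BigOperators
open Finset

variable {V : Type*}

lemma card_out (A : Finset (V × V)) [Fintype V] :
    ∑ v, (Finset.univ.filter fun u => (v, u) ∈ A).card = A.card := by
  classical
  rw [Finset.card_eq_sum_card_fiberwise (f := fun p : V × V => p.1) (t := Finset.univ)
    (fun x _ => Finset.mem_univ _)]
  refine Finset.sum_congr rfl fun v _ => ?_
  refine Finset.card_bij (fun u _ => (v, u)) ?_ ?_ ?_
  · intro u hu
    simp only [Finset.mem_filter, Finset.mem_univ, true_and] at hu
    exact Finset.mem_filter.mpr ⟨hu, rfl⟩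
  · intro a ha b hb h
    exact (Prod.mk.injEq _ _ _ _).mp h |>.2
  · intro p hp
    simp only [Finset.mem_filter] at hp
    obtain ⟨hpA, hp1⟩ := hp
    have hvp : (v, p.2) = p := Prod.ext_iff.mpr ⟨hp1.symm, rfl⟩
    refine ⟨p.2, ?_, hvp⟩
    simp only [Finset.mem_filter, Finset.mem_univ, true_and]
    rw [hvp]
    exact hpA

lemma aux_bound [Fintype V] [Nonempty V]
    (d dt : V → ℕ) (hdt1 : ∀ v, 1 ≤ dt v) (hdtd : ∀ v, dt v ≤ d v)
    (pi pit : V → ℝ) (hpi : ∀ v, pi v = (d v : ℝ) / (∑ u, (d u : ℝ)))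
    (hpit0 : ∀ v, 0 ≤ pit v) (hpit1 : ∑ v, pit v = 1)
    (z : V → ℝ) (M : ℝ) (hM : ∀ v, |z v| ≤ M) :
    (∑ v, pit v * z v / (dt v : ℝ)) / (∑ v, pit v / (dt v : ℝ))
      - (∑ v, z v) / (Fintype.card V : ℝ)
      ≤ 2 * ((∑ u, (d u : ℝ)) / (Fintype.card V : ℝ)) * M *
        ((∑ u, ((d u : ℝ) - (dt u : ℝ))) / (∑ u, (d u : ℝ)) + tvDist pit pi) := by
  classical
  set n : ℝ := (Fintype.card V : ℝ) with hn_def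
  set Ec : ℝ := ∑ u, (d u : ℝ) with hEc_def
  set Fc : ℝ := ∑ u, ((d u : ℝ) - (dt u : ℝ)) with hFc_def
  set S : ℝ := ∑ v, pit v / (dt v : ℝ) with hS_def
  set Δ : ℝ := tvDist pit pi with hΔ_def
  have hn : 0 < n := by
    simp only [hn_def]
    exact_mod_cast Fintype.card_pos
  have hd1 : ∀ v, 1 ≤ d v := fun v => le_trans (hdt1 v) (hdtd v)
  have hnEc : n ≤ Ec := by
    have : ∑ _u : V, (1 : ℝ) ≤ Ec := by
      apply Finset.sum_le_sum
      intro u _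
      exact_mod_cast hd1 u
    simpa using this
  have hEc : 0 < Ec := lt_of_lt_of_le hn hnEc
  have hdtpos : ∀ v, (0 : ℝ) < (dt v : ℝ) := fun v => by exact_mod_cast hdt1 v
  have hFc0 : 0 ≤ Fc := by
    apply Finset.sum_nonneg
    intro u _
    have := hdtd u
    simp only [sub_nonneg]
    exact_mod_cast this
  have hS : 0 < S := by
    obtain ⟨v0, hv0⟩ : ∃ v, 0 < pit v := by
      by_contra h
      push_neg at h
      have : ∑ v, pit v = 0 := Finset.sum_eq_zero fun v _ => le_antisymm (h v) (hpit0 v)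
      rw [hpit1] at this; norm_num at this
    have h1 : 0 < pit v0 / (dt v0 : ℝ) := div_pos hv0 (hdtpos v0)
    have h2 : pit v0 / (dt v0 : ℝ) ≤ S := by
      apply Finset.single_le_sum (f := fun v => pit v / (dt v : ℝ))
        (fun v _ => div_nonneg (hpit0 v) (hdtpos v).le) (Finset.mem_univ v0)
    linarith
  have hM0 : 0 ≤ M := le_trans (abs_nonneg _) (hM (Classical.arbitrary V))
  have hΔ0 : 0 ≤ Δ := by
    rw [hΔ_def, tvDist]
    positivity
  have hΔsum : ∑ v, |pit v - pi v| = 2 * Δ := by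
    rw [hΔ_def, tvDist]; ring
  have hpisum : ∑ v, pi v = 1 := by
    simp only [hpi]
    rw [← Finset.sum_div]
    exact div_self hEc.ne'
  set zbar : ℝ := (∑ v, z v) / n with hzbar_def
  set zmax : ℝ := Finset.univ.sup' Finset.univ_nonempty z with hzmax_def
  set zmin : ℝ := Finset.univ.inf' Finset.univ_nonempty z with hzmin_def
  have hzle : ∀ v, z v ≤ zmax := fun v => Finset.le_sup' z (Finset.mem_univ v)
  have hzge : ∀ v, zmin ≤ z v := fun v => Finset.inf'_le z (Finset.mem_univ v)
  have hzmaxM : zmax ≤ M := Finset.sup'_le _ _ fun v _ => (abs_le.mp (hM v)).2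
  have hzminM : -M ≤ zmin := Finset.le_inf' _ _ fun v _ => (abs_le.mp (hM v)).1
  have hzbar_le : zbar ≤ zmax := by
    rw [hzbar_def, div_le_iff₀ hn]
    calc ∑ v, z v ≤ ∑ _v : V, zmax := Finset.sum_le_sum fun v _ => hzle v
    _ = zmax * n := by simp [mul_comm, hn_def]
  have hzbar_ge : zmin ≤ zbar := by
    rw [hzbar_def, le_div_iff₀ hn]
    calc zmin * n = ∑ _v : V, zmin := by simp [mul_comm, hn_def]
    _ ≤ ∑ v, z v := Finset.sum_le_sum fun v _ => hzge v
  set R : ℝ := 2 * (Ec / n) * M * (Fc / Ec + Δ) with hR_def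
  have hR0 : 0 ≤ R := by
    apply mul_nonneg
    apply mul_nonneg
    · positivity
    · exact hM0
    · positivity
  -- the goal is `num / S - zbar ≤ R`
  show (∑ v, pit v * z v / (dt v : ℝ)) / S - zbar ≤ R
  set num : ℝ := ∑ v, pit v * z v / (dt v : ℝ) with hnum_def
  by_cases hcase : zmax - zbar < R
  · -- easy case
    have h1 : num ≤ zmax * S := by
      rw [hnum_def, hS_def, Finset.mul_sum]
      apply Finset.sum_le_sum
      intro v _
      have : pit v * z v / (dt v : ℝ) = (pit v / (dt v : ℝ)) * z v := by ring
      rw [this]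
      calc (pit v / (dt v : ℝ)) * z v ≤ (pit v / (dt v : ℝ)) * zmax :=
        mul_le_mul_of_nonneg_left (hzle v) (div_nonneg (hpit0 v) (hdtpos v).le)
      _ = zmax * (pit v / (dt v : ℝ)) := mul_comm _ _
    have : num / S ≤ zmax := by rw [div_le_iff₀ hS]; linarith [h1]
    linarith
  · push_neg at hcase
    have hhi0 : 0 ≤ zmax - zbar - R := by linarith
    set hi : ℝ := zmax - zbar - R with hhi_def
    set lo : ℝ := zmin - zbar - R with hlo_def
    have hlo0 : lo ≤ 0 := by rw [hlo_def]; linarith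
    set ζ : V → ℝ := fun v => (z v - zbar - R) / (dt v : ℝ) with hζ_def
    have hζhi : ∀ v, ζ v ≤ hi := by
      intro v
      have hc : (1 : ℝ) ≤ (dt v : ℝ) := by exact_mod_cast hdt1 v
      by_cases h : 0 ≤ z v - zbar - R
      · have h1 : ζ v ≤ z v - zbar - R := div_le_self h hc
        have h2 : z v - zbar - R ≤ hi := by rw [hhi_def]; linarith [hzle v]
        linarith
      · push_neg at h
        have h1 : ζ v ≤ 0 := div_nonpos_of_nonpos_of_nonneg h.le (hdtpos v).le
        linarith [hhi0, h1]
    have hζlo : ∀ v, lo ≤ ζ v := by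
      intro v
      by_cases h : 0 ≤ z v - zbar - R
      · have : 0 ≤ ζ v := div_nonneg h (hdtpos v).le
        linarith
      · push_neg at h
        have hc : (1 : ℝ) ≤ (dt v : ℝ) := by exact_mod_cast hdt1 v
        have h1 : z v - zbar - R ≤ ζ v := by
          rw [hζ_def]
          rw [le_div_iff₀ (hdtpos v)]
          nlinarith
        have h2 : lo ≤ z v - zbar - R := by rw [hlo_def]; linarith [hzge v]
        linarith
    have hwidth : hi - lo = zmax - zmin := by rw [hhi_def, hlo_def]; ring
    have hwidth2M : zmax - zmin ≤ 2 * M := by linarith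
    -- key decomposition
    have hdecomp : ∀ v, pit v / (dt v : ℝ) * (z v - zbar - R)
        = (1 / Ec) * (z v - zbar - R) + (pit v - pi v) * ζ v
          + (((d v : ℝ) - (dt v : ℝ)) / Ec) * ζ v := by
      intro v
      rw [hpi v, hζ_def]
      have h1 : ((dt v : ℝ)) ≠ 0 := (hdtpos v).ne'
      field_simp
      ring
    have hT : num - (zbar + R) * S ≤ 0 := by
      have hTeq : num - (zbar + R) * S = ∑ v, pit v / (dt v : ℝ) * (z v - zbar - R) := by
        rw [hnum_def, hS_def, Finset.mul_sum, ← Finset.sum_sub_distrib]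
        apply Finset.sum_congr rfl
        intro v _
        ring
      rw [hTeq]
      have hsplit : ∑ v, pit v / (dt v : ℝ) * (z v - zbar - R)
          = (∑ v, (1 / Ec) * (z v - zbar - R)) + (∑ v, (pit v - pi v) * ζ v)
            + (∑ v, (((d v : ℝ) - (dt v : ℝ)) / Ec) * ζ v) := by
        rw [← Finset.sum_add_distrib, ← Finset.sum_add_distrib]
        exact Finset.sum_congr rfl fun v _ => hdecomp v
      rw [hsplit]
      -- T0
      have hT0 : (∑ v, (1 / Ec) * (z v - zbar - R)) = -(n * R) / Ec := by
        rw [← Finset.mul_sum]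
        have h1 : ∑ v, (z v - zbar - R) = -(n * R) := by
          rw [Finset.sum_sub_distrib, Finset.sum_sub_distrib]
          simp only [Finset.sum_const, Finset.card_univ, nsmul_eq_mul]
          have h2 : ∑ v, z v = n * zbar := by
            rw [hzbar_def]; field_simp
          rw [h2, hn_def]
          ring
        rw [h1]
        ring
      -- T1
      have hT1 : (∑ v, (pit v - pi v) * ζ v) ≤ Δ * (hi - lo) := by
        have hδ0 : ∑ v, (pit v - pi v) = 0 := by
          rw [Finset.sum_sub_distrib, hpit1, hpisum]; ring
        set m : ℝ := (hi + lo) / 2 with hm_def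
        have heq : (∑ v, (pit v - pi v) * ζ v) = ∑ v, (pit v - pi v) * (ζ v - m) := by
          have hpt : ∀ v ∈ Finset.univ, (pit v - pi v) * (ζ v - m)
              = (pit v - pi v) * ζ v - (pit v - pi v) * m :=
            fun v _ => by ring
          rw [Finset.sum_congr rfl hpt, Finset.sum_sub_distrib, ← Finset.sum_mul, hδ0,
            zero_mul, sub_zero]
        rw [heq]
        calc ∑ v, (pit v - pi v) * (ζ v - m)
            ≤ ∑ v, |pit v - pi v| * ((hi - lo) / 2) := by
              apply Finset.sum_le_sum
              intro v _
              calc (pit v - pi v) * (ζ v - m) ≤ |(pit v - pi v) * (ζ v - m)| := le_abs_self _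
              _ = |pit v - pi v| * |ζ v - m| := abs_mul _ _
              _ ≤ |pit v - pi v| * ((hi - lo) / 2) := by
                  apply mul_le_mul_of_nonneg_left _ (abs_nonneg _)
                  rw [abs_le]
                  constructor
                  · rw [hm_def]; linarith [hζlo v]
                  · rw [hm_def]; linarith [hζhi v]
        _ = (∑ v, |pit v - pi v|) * ((hi - lo) / 2) := by rw [Finset.sum_mul]
        _ = 2 * Δ * ((hi - lo) / 2) := by rw [hΔsum]
        _ = Δ * (hi - lo) := by ring
      -- T2
      have hT2 : (∑ v, (((d v : ℝ) - (dt v : ℝ)) / Ec) * ζ v) ≤ (Fc / Ec) * hi := by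
        calc ∑ v, (((d v : ℝ) - (dt v : ℝ)) / Ec) * ζ v
            ≤ ∑ v, (((d v : ℝ) - (dt v : ℝ)) / Ec) * hi := by
              apply Finset.sum_le_sum
              intro v _
              apply mul_le_mul_of_nonneg_left (hζhi v)
              apply div_nonneg _ hEc.le
              simp only [sub_nonneg]
              exact_mod_cast hdtd v
        _ = (Fc / Ec) * hi := by
            rw [← Finset.sum_mul, hFc_def]
            rw [Finset.sum_div]
      have hhi2M : hi ≤ 2 * M := by
        rw [hhi_def]
        linarith
      have hΔbd : Δ * (hi - lo) ≤ Δ * (2 * M) := by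
        apply mul_le_mul_of_nonneg_left _ hΔ0
        rw [hwidth]; exact hwidth2M
      have hFbd : (Fc / Ec) * hi ≤ (Fc / Ec) * (2 * M) := by
        apply mul_le_mul_of_nonneg_left hhi2M
        positivity
      have hRid : n * R / Ec = 2 * M * (Fc / Ec + Δ) := by
        have h2 : Ec / n * n = Ec := div_mul_cancel₀ Ec hn.ne'
        have h1 : n * R = 2 * M * (Fc / Ec + Δ) * Ec := by
          rw [hR_def]
          calc n * (2 * (Ec / n) * M * (Fc / Ec + Δ))
              = (Ec / n * n) * (2 * M * (Fc / Ec + Δ)) := by ring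
          _ = Ec * (2 * M * (Fc / Ec + Δ)) := by rw [h2]
          _ = 2 * M * (Fc / Ec + Δ) * Ec := by ring
        rw [h1, mul_div_assoc, div_self hEc.ne', mul_one]
      have : -(n * R) / Ec + Δ * (2 * M) + (Fc / Ec) * (2 * M) = 0 := by
        rw [neg_div, hRid]
        ring
      linarith [hT0, hT1, hT2, hΔbd, hFbd]
    have h2 : num / S ≤ zbar + R := by
      rw [div_le_iff₀ hS]
      linarith
    linarith

/-- distributed averaging with faulty communication links:
`|ỹ - ȳ| ≤ 2 d̄ ‖y‖_∞ (|F|/|E| + ‖π̃ - π‖)`. -/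
theorem stmt11 [Fintype V] [Nonempty V]
    (E F : Finset (V × V))
    (hsym : ∀ u v : V, (u, v) ∈ E → (v, u) ∈ E)
    (hconn : ∀ u v : V, Relation.ReflTransGen (fun a b => (a, b) ∈ E) u v)
    (d : V → ℕ) (hd : ∀ v, d v = (Finset.univ.filter fun u => (v, u) ∈ E).card)
    (hd1 : ∀ v, 1 ≤ d v)
    (dbar : ℝ) (hdbar : dbar = (1 / (Fintype.card V : ℝ)) * ∑ v, (d v : ℝ))
    (pi : V → ℝ) (hpi : ∀ v, pi v = (d v : ℝ) / ((Fintype.card V : ℝ) * dbar))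
    (hF : F ⊆ E)
    (dt : V → ℕ) (hdt : ∀ v, dt v = (Finset.univ.filter fun u => (v, u) ∈ E \ F).card)
    (hdt1 : ∀ v, 1 ≤ dt v)
    (hconn2 : ∀ u v : V, Relation.ReflTransGen (fun a b => (a, b) ∈ E \ F) u v)
    (Pt : Matrix V V ℝ)
    (hPt : ∀ u v, Pt u v =
      ((if u = v then (1 : ℝ) else 0) + (if (u, v) ∈ E \ F then 1 / (dt u : ℝ) else 0)) / 2)
    (pit : V → ℝ) (hpit : InvariantProb Pt pit)
    (y : V → ℝ) (ybar ytil : ℝ)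
    (hybar : ybar = (1 / (Fintype.card V : ℝ)) * ∑ v, y v)
    (hytil : ytil = (∑ v, pit v * y v / (dt v : ℝ)) / (∑ v, pit v / (dt v : ℝ))) :
    |ytil - ybar| ≤ 2 * dbar * (Finset.univ.sup' Finset.univ_nonempty fun v => |y v|) *
      ((F.card : ℝ) / (E.card : ℝ) + tvDist pit pi) := by
  classical
  obtain ⟨hpit0, hpit1, _⟩ := hpit
  have hn : (0 : ℝ) < (Fintype.card V : ℝ) := by exact_mod_cast Fintype.card_pos
  have hdtd : ∀ v, dt v ≤ d v := by
    intro v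
    rw [hd, hdt]
    apply Finset.card_le_card
    intro u hu
    simp only [Finset.mem_filter, Finset.mem_univ, true_and] at hu ⊢
    exact (Finset.mem_sdiff.mp hu).1
  have hdsum : ∑ u, d u = E.card := by
    rw [Finset.sum_congr rfl fun v (_ : v ∈ Finset.univ) => hd v]
    exact card_out E
  have hdsumE : ∑ u, (d u : ℝ) = (E.card : ℝ) := by
    rw [← Nat.cast_sum]
    exact_mod_cast hdsum
  have hdtsum : ∑ u, dt u = (E \ F).card := by
    rw [Finset.sum_congr rfl fun v (_ : v ∈ Finset.univ) => hdt v]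
    exact card_out (E \ F)
  have hFle : F.card ≤ E.card := Finset.card_le_card hF
  have hdtsumE : ∑ u, (dt u : ℝ) = (E.card : ℝ) - (F.card : ℝ) := by
    rw [← Nat.cast_sum, hdtsum, Finset.card_sdiff_of_subset hF, Nat.cast_sub hFle]
  have hFc : ∑ u, ((d u : ℝ) - (dt u : ℝ)) = (F.card : ℝ) := by
    rw [Finset.sum_sub_distrib, hdsumE, hdtsumE]
    ring
  have hnE : (Fintype.card V : ℝ) ≤ (E.card : ℝ) := by
    rw [← hdsumE]
    calc (Fintype.card V : ℝ) = ∑ _u : V, (1 : ℝ) := by simp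
    _ ≤ ∑ u, (d u : ℝ) := Finset.sum_le_sum fun u _ => by exact_mod_cast hd1 u
  have hEpos : (0 : ℝ) < (E.card : ℝ) := lt_of_lt_of_le hn hnE
  have hdbarE : dbar = (∑ u, (d u : ℝ)) / (Fintype.card V : ℝ) := by
    rw [hdbar]; ring
  have hpi' : ∀ v, pi v = (d v : ℝ) / (∑ u, (d u : ℝ)) := by
    intro v
    rw [hpi, hdbarE]
    congr 1
    rw [mul_div_assoc']
    rw [mul_comm]
    rw [mul_div_assoc]
    rw [div_self hn.ne', mul_one]
  set M : ℝ := Finset.univ.sup' Finset.univ_nonempty fun v => |y v| with hM_def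
  have hMy : ∀ v, |y v| ≤ M := fun v => Finset.le_sup' (fun v => |y v|) (Finset.mem_univ v)
  have hybar' : ybar = (∑ v, y v) / (Fintype.card V : ℝ) := by rw [hybar]; ring
  have A1 := aux_bound d dt hdt1 hdtd pi pit hpi' hpit0 hpit1 y M hMy
  have A2 := aux_bound d dt hdt1 hdtd pi pit hpi' hpit0 hpit1 (fun v => -y v) M
    (fun v => by rw [abs_neg]; exact hMy v)
  have hdbarE' : dbar = ((E.card : ℝ)) / (Fintype.card V : ℝ) := by rw [hdbarE, hdsumE]
  rw [hdsumE, hFc, ← hdbarE'] at A1 A2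
  simp only [mul_neg, neg_div, Finset.sum_neg_distrib] at A2
  rw [abs_sub_le_iff]
  constructor
  · rw [hytil, hybar']
    exact A1
  · rw [hytil, hybar']
    linarith [A2]
end
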